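/- For all integers m and n with 2 ≤ m ≤ n and n ≥ 6, the prime difference graph G_n contains a Hamilton path from 1 to m, i.e., there is a bijective sequence a_1, ..., a_n of {1,...,n} with a_1 = 1, a_n = m, and each consecutive difference |a_i - a_{i+1}| prime. -/

import Mathlib

/-- `a 0, ..., a (n-1)` is a Hamilton path of `{1,...,n}` with all consecutive
absolute differences prime. -/
def IsPrimeDiffHamPath (n : ℕ) (a : ℕ → ℤ) : Prop :=
  Set.BijOn a (Set.Ico 0 n) (Set.Icc 1 (n : ℤ)) ∧
  (∀ i, i + 1 < n → ((a i - a (i + 1)).natAbs).Prime)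

def Pp (a b : ℕ) : Prop := ((a:ℤ) - b).natAbs.Prime

instance : DecidableRel Pp := fun _ _ => inferInstanceAs (Decidable (Nat.Prime _))

def chainB : List ℕ → Bool
  | [] => true
  | [_] => true
  | a :: b :: r => decide (Pp a b) && chainB (b :: r)

theorem chainB_iff : ∀ l : List ℕ, chainB l = true ↔ l.Chain' Pp
  | [] => by simp [chainB, List.Chain']
  | [a] => by simp [chainB, List.Chain']
  | a :: b :: r => by
    unfold List.Chain'; rw [List.isChain_cons_cons]
    simp [chainB, chainB_iff (b :: r), List.Chain']

instance (priority := 2000) (l : List ℕ) : Decidable (l.Chain' Pp) :=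
  decidable_of_iff _ (chainB_iff l)

theorem Pp_nat {a b p : ℕ} (h : a + p = b ∨ b + p = a) (hp : p.Prime) : Pp a b := by
  unfold Pp
  have : ((a:ℤ) - b).natAbs = p := by omega
  rwa [this]

def HamOn (S : Finset ℕ) (u v : ℕ) (l : List ℕ) : Prop :=
  l.Chain' Pp ∧ l.Nodup ∧ l.toFinset = S ∧ l.head? = some u ∧ l.getLast? = some v

instance (S : Finset ℕ) (u v : ℕ) (l : List ℕ) : Decidable (HamOn S u v l) :=
  inferInstanceAs (Decidable (l.Chain' Pp ∧ l.Nodup ∧ l.toFinset = S ∧ l.head? = some u ∧ l.getLast? = some v))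

def HamP (n u v : ℕ) (l : List ℕ) : Prop := HamOn (Finset.Icc 1 n) u v l

instance (n u v : ℕ) (l : List ℕ) : Decidable (HamP n u v l) :=
  inferInstanceAs (Decidable (HamOn _ _ _ _))

def getW (W : List ((Nat × Nat) × List Nat)) (u v : Nat) : List Nat :=
  (W.lookup (u, v)).getD []

def getP2 (W : List ((Nat × Nat) × (List Nat × List Nat))) (u v : Nat) : List Nat × List Nat :=
  (W.lookup (u, v)).getD ([], [])

def getP6 (W : List ((Nat × Nat) × (List Nat × List Nat × Nat × Nat × Nat × Nat))) (u v : Nat) :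
    List Nat × List Nat × Nat × Nat × Nat × Nat :=
  (W.lookup (u, v)).getD ([], [], 0, 0, 0, 0)

theorem Pp_symm {a b : ℕ} (h : Pp a b) : Pp b a := by
  unfold Pp at *; rwa [← Int.natAbs_neg, neg_sub]

theorem Pp_shift {a b s : ℕ} : Pp (a + s) (b + s) ↔ Pp a b := by
  unfold Pp
  have : ((a + s : ℕ) : ℤ) - ((b + s : ℕ) : ℤ) = (a : ℤ) - b := by push_cast; ring
  rw [this]

theorem HamOn.reverse {S u v l} (h : HamOn S u v l) : HamOn S v u l.reverse := by
  obtain ⟨hc, hnd, hcov, hh, hl⟩ := h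
  refine ⟨?_, by simpa using hnd, by simpa using hcov, by simpa using hl, by simpa using hh⟩
  unfold List.Chain' at hc ⊢; rw [List.isChain_reverse]
  exact hc.imp fun a b hab => Pp_symm hab

theorem HamOn.shift {S u v l} (s : ℕ) (h : HamOn S u v l) :
    HamOn (S.image (· + s)) (u + s) (v + s) (l.map (· + s)) := by
  obtain ⟨hc, hnd, hcov, hh, hl⟩ := h
  refine ⟨?_, ?_, ?_, ?_, ?_⟩
  · unfold List.Chain' at hc ⊢; rw [List.isChain_map]
    exact hc.imp fun a b hab => Pp_shift.mpr hab
  · exact hnd.map fun a b hab => by omega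
  · ext a
    simp only [List.mem_toFinset, List.mem_map, Finset.mem_image, ← hcov, List.mem_toFinset]
  · rw [List.head?_map, hh]; rfl
  · rw [List.getLast?_map, hl]; rfl

theorem glue2 {S T : Finset ℕ} {u x y v : ℕ} {A B : List ℕ}
    (hA : HamOn S u x A) (hB : HamOn T y v B) (hST : Disjoint S T) (hxy : Pp x y) :
    HamOn (S ∪ T) u v (A ++ B) := by
  obtain ⟨ca, na, fa, ha, la⟩ := hA
  obtain ⟨cb, nb, fb, hb, lb⟩ := hB
  have hA0 : A ≠ [] := by rintro rfl; simp at ha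
  have hB0 : B ≠ [] := by rintro rfl; simp at hb
  refine ⟨?_, ?_, ?_, ?_, ?_⟩
  · unfold List.Chain'; rw [List.isChain_append]
    refine ⟨ca, cb, fun a hla b hhb => ?_⟩
    rw [la] at hla; rw [hb] at hhb
    simp only [Option.mem_some_iff] at hla hhb
    subst hla; subst hhb; exact hxy
  · rw [List.nodup_append]
    refine ⟨na, nb, fun a haA b haB hab => ?_⟩
    have h1 : a ∈ S := by rw [← fa]; exact List.mem_toFinset.2 haA
    have h2 : a ∈ T := by rw [← fb]; exact List.mem_toFinset.2 (hab ▸ haB)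
    exact (Finset.disjoint_left.1 hST h1) h2
  · rw [List.toFinset_append, fa, fb]
  · rwa [List.head?_append_of_ne_nil _ hA0]
  · rwa [List.getLast?_append_of_ne_nil _ hB0]

theorem glue3 {S T : Finset ℕ} {u v x w y z : ℕ} {L1 L2 B : List ℕ}
    (h : HamOn S u v (L1 ++ L2)) (hx : L1.getLast? = some x) (hw : L2.head? = some w)
    (hB : HamOn T y z B) (hST : Disjoint S T) (p1 : Pp x y) (p2 : Pp z w) :
    HamOn (S ∪ T) u v (L1 ++ (B ++ L2)) := by
  obtain ⟨hc, hnd, hcov, hh, hl⟩ := h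
  obtain ⟨cb, nb, fb, hb, lb⟩ := hB
  unfold List.Chain' at hc; rw [List.isChain_append] at hc
  obtain ⟨c1, c2, _⟩ := hc
  rw [List.nodup_append] at hnd
  obtain ⟨n1, n2, d12⟩ := hnd
  rw [List.toFinset_append] at hcov
  have hL10 : L1 ≠ [] := by rintro rfl; simp at hx
  have hL20 : L2 ≠ [] := by rintro rfl; simp at hw
  have hB0 : B ≠ [] := by rintro rfl; simp at hb
  have memS1 : ∀ a ∈ L1, a ∈ S := fun a ha => by
    rw [← hcov]; exact Finset.mem_union_left _ (List.mem_toFinset.2 ha)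
  have memS2 : ∀ a ∈ L2, a ∈ S := fun a ha => by
    rw [← hcov]; exact Finset.mem_union_right _ (List.mem_toFinset.2 ha)
  have memT : ∀ a ∈ B, a ∈ T := fun a ha => by rw [← fb]; exact List.mem_toFinset.2 ha
  refine ⟨?_, ?_, ?_, ?_, ?_⟩
  · unfold List.Chain'; rw [List.isChain_append]
    refine ⟨c1, ?_, fun a hla b hhb => ?_⟩
    · rw [List.isChain_append]
      refine ⟨cb, c2, fun a hla b hhb => ?_⟩
      rw [lb] at hla; rw [hw] at hhb
      simp only [Option.mem_some_iff] at hla hhb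
      subst hla; subst hhb; exact p2
    · rw [hx] at hla
      rw [List.head?_append_of_ne_nil _ hB0, hb] at hhb
      simp only [Option.mem_some_iff] at hla hhb
      subst hla; subst hhb; exact p1
  · rw [List.nodup_append]
    refine ⟨n1, ?_, fun a haL1 b hab heq => ?_⟩
    · rw [List.nodup_append]
      refine ⟨nb, n2, fun a haB b haL2 heq => ?_⟩
      exact (Finset.disjoint_left.1 hST (memS2 b haL2)) (heq ▸ memT a haB)
    · rcases List.mem_append.1 hab with hB' | hL2'
      · exact (Finset.disjoint_left.1 hST (memS1 a haL1)) (heq ▸ memT b hB')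
      · exact d12 a haL1 b hL2' heq
  · rw [List.toFinset_append, List.toFinset_append, fb, ← hcov]
    ext a
    simp only [Finset.mem_union]
    tauto
  · rw [List.head?_append_of_ne_nil _ hL10]
    rwa [List.head?_append_of_ne_nil _ hL10] at hh
  · rw [List.getLast?_append_of_ne_nil _ (by simp [hL20] : B ++ L2 ≠ []),
        List.getLast?_append_of_ne_nil _ hL20]
    rwa [List.getLast?_append_of_ne_nil _ hL20] at hl

theorem Icc_image_add (a b s : ℕ) :
    (Finset.Icc a b).image (· + s) = Finset.Icc (a + s) (b + s) := by
  ext x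
  simp only [Finset.mem_image, Finset.mem_Icc]
  constructor
  · rintro ⟨c, hc, rfl⟩; omega
  · intro hx; exact ⟨x - s, by omega, by omega⟩

theorem Icc_union_Icc {a b n : ℕ} (h1 : a ≤ b + 1) (h2 : b ≤ n) :
    Finset.Icc a b ∪ Finset.Icc (b + 1) n = Finset.Icc a n := by
  ext x; simp only [Finset.mem_union, Finset.mem_Icc]; omega

theorem Icc_disj {a b c n : ℕ} (h : b < c) : Disjoint (Finset.Icc a b) (Finset.Icc c n) := by
  rw [Finset.disjoint_left]
  intro x hx hx'
  simp only [Finset.mem_Icc] at hx hx'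
  omega

def W9 : List ((Nat × Nat) × List Nat) := [
  ((1, 2), [1, 3, 5, 8, 6, 4, 7, 9, 2]),
  ((1, 3), [1, 4, 2, 5, 7, 9, 6, 8, 3]),
  ((1, 4), [1, 3, 5, 8, 6, 9, 2, 7, 4]),
  ((1, 5), [1, 3, 8, 6, 4, 2, 9, 7, 5]),
  ((1, 6), [1, 3, 8, 5, 2, 4, 7, 9, 6]),
  ((1, 7), [1, 3, 5, 8, 6, 4, 2, 9, 7]),
  ((1, 8), [1, 3, 5, 2, 4, 7, 9, 6, 8]),
  ((1, 9), [1, 3, 5, 8, 6, 4, 2, 7, 9]),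
  ((2, 3), [2, 4, 1, 6, 9, 7, 5, 8, 3]),
  ((2, 4), [2, 5, 3, 1, 8, 6, 9, 7, 4]),
  ((2, 5), [2, 4, 1, 3, 8, 6, 9, 7, 5]),
  ((2, 6), [2, 4, 1, 3, 8, 5, 7, 9, 6]),
  ((2, 7), [2, 4, 1, 3, 5, 8, 6, 9, 7]),
  ((2, 8), [2, 4, 1, 3, 5, 7, 9, 6, 8]),
  ((2, 9), [2, 4, 1, 3, 6, 8, 5, 7, 9]),
  ((3, 4), [3, 1, 6, 8, 5, 2, 7, 9, 4]),
  ((3, 5), [3, 1, 4, 2, 7, 9, 6, 8, 5]),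
  ((3, 6), [3, 1, 4, 2, 9, 7, 5, 8, 6]),
  ((3, 7), [3, 1, 4, 2, 5, 8, 6, 9, 7]),
  ((3, 8), [3, 1, 4, 2, 5, 7, 9, 6, 8]),
  ((3, 9), [3, 1, 4, 2, 7, 5, 8, 6, 9]),
  ((4, 5), [4, 1, 3, 8, 6, 9, 2, 7, 5]),
  ((4, 6), [4, 1, 3, 8, 5, 2, 7, 9, 6]),
  ((4, 7), [4, 1, 3, 5, 8, 6, 9, 2, 7]),
  ((4, 8), [4, 1, 3, 5, 2, 7, 9, 6, 8]),
  ((4, 9), [4, 1, 3, 6, 8, 5, 2, 7, 9]),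
  ((5, 6), [5, 2, 7, 9, 4, 1, 3, 8, 6]),
  ((5, 7), [5, 2, 4, 1, 3, 8, 6, 9, 7]),
  ((5, 8), [5, 2, 4, 7, 9, 6, 1, 3, 8]),
  ((5, 9), [5, 2, 7, 4, 1, 3, 8, 6, 9]),
  ((6, 7), [6, 1, 3, 8, 5, 2, 4, 9, 7]),
  ((6, 8), [6, 1, 4, 2, 9, 7, 5, 3, 8]),
  ((6, 9), [6, 1, 3, 8, 5, 2, 4, 7, 9]),
  ((7, 8), [7, 2, 4, 9, 6, 1, 3, 5, 8]),
  ((7, 9), [7, 2, 4, 1, 3, 5, 8, 6, 9]),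
  ((8, 9), [8, 1, 3, 5, 2, 7, 4, 6, 9])]

def W10 : List ((Nat × Nat) × List Nat) := [
  ((1, 2), [1, 3, 5, 7, 10, 8, 6, 4, 9, 2]),
  ((1, 3), [1, 4, 2, 5, 7, 9, 6, 8, 10, 3]),
  ((1, 4), [1, 3, 5, 2, 7, 10, 8, 6, 9, 4]),
  ((1, 5), [1, 3, 6, 4, 2, 9, 7, 10, 8, 5]),
  ((1, 6), [1, 3, 5, 2, 4, 9, 7, 10, 8, 6]),
  ((1, 7), [1, 3, 5, 2, 4, 9, 6, 8, 10, 7]),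
  ((1, 8), [1, 3, 5, 2, 4, 6, 9, 7, 10, 8]),
  ((1, 9), [1, 3, 5, 2, 4, 6, 8, 10, 7, 9]),
  ((1, 10), [1, 3, 5, 2, 4, 7, 9, 6, 8, 10]),
  ((2, 3), [2, 4, 1, 6, 9, 7, 5, 8, 10, 3]),
  ((2, 4), [2, 5, 3, 1, 6, 8, 10, 7, 9, 4]),
  ((2, 5), [2, 4, 1, 3, 6, 9, 7, 10, 8, 5]),
  ((2, 6), [2, 4, 1, 3, 5, 8, 10, 7, 9, 6]),
  ((2, 7), [2, 4, 1, 3, 5, 10, 8, 6, 9, 7]),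
  ((2, 8), [2, 4, 1, 3, 5, 10, 7, 9, 6, 8]),
  ((2, 9), [2, 4, 1, 3, 5, 7, 10, 8, 6, 9]),
  ((2, 10), [2, 4, 1, 3, 5, 7, 9, 6, 8, 10]),
  ((3, 4), [3, 1, 6, 8, 5, 10, 7, 2, 9, 4]),
  ((3, 5), [3, 1, 4, 2, 7, 9, 6, 8, 10, 5]),
  ((3, 6), [3, 1, 4, 2, 5, 8, 10, 7, 9, 6]),
  ((3, 7), [3, 1, 4, 2, 5, 10, 8, 6, 9, 7]),
  ((3, 8), [3, 1, 4, 2, 5, 10, 7, 9, 6, 8]),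
  ((3, 9), [3, 1, 4, 2, 5, 7, 10, 8, 6, 9]),
  ((3, 10), [3, 1, 4, 2, 5, 7, 9, 6, 8, 10]),
  ((4, 5), [4, 1, 3, 6, 8, 10, 7, 9, 2, 5]),
  ((4, 6), [4, 1, 3, 5, 2, 9, 7, 10, 8, 6]),
  ((4, 7), [4, 1, 3, 5, 2, 9, 6, 8, 10, 7]),
  ((4, 8), [4, 1, 3, 5, 10, 7, 2, 9, 6, 8]),
  ((4, 9), [4, 1, 3, 5, 2, 7, 10, 8, 6, 9]),
  ((4, 10), [4, 1, 3, 5, 2, 7, 9, 6, 8, 10]),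
  ((5, 6), [5, 2, 4, 1, 3, 8, 10, 7, 9, 6]),
  ((5, 7), [5, 2, 4, 1, 3, 10, 8, 6, 9, 7]),
  ((5, 8), [5, 2, 4, 1, 3, 6, 9, 7, 10, 8]),
  ((5, 9), [5, 2, 4, 1, 3, 6, 8, 10, 7, 9]),
  ((5, 10), [5, 2, 4, 1, 3, 8, 6, 9, 7, 10]),
  ((6, 7), [6, 1, 3, 8, 10, 5, 2, 4, 9, 7]),
  ((6, 8), [6, 1, 3, 5, 2, 4, 9, 7, 10, 8]),
  ((6, 9), [6, 1, 3, 5, 8, 10, 7, 2, 4, 9]),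
  ((6, 10), [6, 1, 3, 8, 5, 2, 4, 9, 7, 10]),
  ((7, 8), [7, 2, 4, 9, 6, 1, 3, 5, 10, 8]),
  ((7, 9), [7, 2, 4, 1, 3, 5, 10, 8, 6, 9]),
  ((7, 10), [7, 2, 4, 9, 6, 1, 3, 5, 8, 10]),
  ((8, 9), [8, 1, 3, 5, 10, 7, 2, 4, 6, 9]),
  ((8, 10), [8, 1, 3, 5, 2, 4, 6, 9, 7, 10]),
  ((9, 10), [9, 2, 4, 1, 3, 6, 8, 5, 7, 10])]

def W11 : List ((Nat × Nat) × List Nat) := [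
  ((1, 2), [1, 3, 5, 7, 10, 8, 6, 4, 11, 9, 2]),
  ((1, 3), [1, 4, 2, 5, 7, 9, 6, 11, 8, 10, 3]),
  ((1, 4), [1, 3, 5, 2, 7, 10, 8, 6, 9, 11, 4]),
  ((1, 5), [1, 3, 6, 4, 2, 7, 9, 11, 8, 10, 5]),
  ((1, 6), [1, 3, 5, 2, 4, 7, 10, 8, 11, 9, 6]),
  ((1, 7), [1, 3, 5, 2, 4, 6, 9, 11, 8, 10, 7]),
  ((1, 8), [1, 3, 5, 2, 4, 6, 11, 9, 7, 10, 8]),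
  ((1, 9), [1, 3, 5, 2, 4, 6, 11, 8, 10, 7, 9]),
  ((1, 10), [1, 3, 5, 2, 4, 6, 8, 11, 9, 7, 10]),
  ((1, 11), [1, 3, 5, 2, 4, 6, 8, 10, 7, 9, 11]),
  ((2, 3), [2, 4, 1, 6, 8, 11, 9, 7, 5, 10, 3]),
  ((2, 4), [2, 5, 3, 1, 6, 8, 10, 7, 9, 11, 4]),
  ((2, 5), [2, 4, 1, 3, 6, 8, 11, 9, 7, 10, 5]),
  ((2, 6), [2, 4, 1, 3, 5, 7, 10, 8, 11, 9, 6]),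
  ((2, 7), [2, 4, 1, 3, 5, 10, 8, 6, 11, 9, 7]),
  ((2, 8), [2, 4, 1, 3, 5, 10, 7, 9, 6, 11, 8]),
  ((2, 9), [2, 4, 1, 3, 5, 7, 10, 8, 6, 11, 9]),
  ((2, 10), [2, 4, 1, 3, 5, 7, 9, 6, 11, 8, 10]),
  ((2, 11), [2, 4, 1, 3, 5, 7, 10, 8, 6, 9, 11]),
  ((3, 4), [3, 1, 6, 8, 5, 10, 7, 2, 9, 11, 4]),
  ((3, 5), [3, 1, 4, 2, 7, 9, 6, 11, 8, 10, 5]),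
  ((3, 6), [3, 1, 4, 2, 5, 7, 10, 8, 11, 9, 6]),
  ((3, 7), [3, 1, 4, 2, 5, 10, 8, 6, 11, 9, 7]),
  ((3, 8), [3, 1, 4, 2, 5, 10, 7, 9, 6, 11, 8]),
  ((3, 9), [3, 1, 4, 2, 5, 7, 10, 8, 6, 11, 9]),
  ((3, 10), [3, 1, 4, 2, 5, 7, 9, 6, 11, 8, 10]),
  ((3, 11), [3, 1, 4, 2, 5, 7, 10, 8, 6, 9, 11]),
  ((4, 5), [4, 1, 3, 6, 8, 11, 9, 2, 7, 10, 5]),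
  ((4, 6), [4, 1, 3, 5, 2, 7, 10, 8, 11, 9, 6]),
  ((4, 7), [4, 1, 3, 5, 2, 9, 6, 11, 8, 10, 7]),
  ((4, 8), [4, 1, 3, 5, 10, 7, 2, 9, 6, 11, 8]),
  ((4, 9), [4, 1, 3, 5, 2, 7, 10, 8, 6, 11, 9]),
  ((4, 10), [4, 1, 3, 5, 2, 7, 9, 6, 11, 8, 10]),
  ((4, 11), [4, 1, 3, 5, 2, 7, 10, 8, 6, 9, 11]),
  ((5, 6), [5, 2, 4, 1, 3, 8, 10, 7, 9, 11, 6]),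
  ((5, 7), [5, 2, 4, 1, 3, 6, 9, 11, 8, 10, 7]),
  ((5, 8), [5, 2, 4, 1, 3, 6, 11, 9, 7, 10, 8]),
  ((5, 9), [5, 2, 4, 1, 3, 6, 11, 8, 10, 7, 9]),
  ((5, 10), [5, 2, 4, 1, 3, 6, 8, 11, 9, 7, 10]),
  ((5, 11), [5, 2, 4, 1, 3, 6, 8, 10, 7, 9, 11]),
  ((6, 7), [6, 1, 3, 5, 2, 4, 9, 11, 8, 10, 7]),
  ((6, 8), [6, 1, 3, 5, 2, 4, 11, 9, 7, 10, 8]),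
  ((6, 9), [6, 1, 3, 5, 2, 4, 7, 10, 8, 11, 9]),
  ((6, 10), [6, 1, 3, 5, 2, 4, 7, 9, 11, 8, 10]),
  ((6, 11), [6, 1, 3, 5, 2, 4, 9, 7, 10, 8, 11]),
  ((7, 8), [7, 2, 4, 9, 11, 6, 1, 3, 5, 10, 8]),
  ((7, 9), [7, 2, 4, 1, 3, 5, 10, 8, 6, 11, 9]),
  ((7, 10), [7, 2, 4, 1, 3, 6, 9, 11, 8, 5, 10]),
  ((7, 11), [7, 2, 4, 1, 3, 5, 10, 8, 6, 9, 11]),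
  ((8, 9), [8, 1, 3, 5, 10, 7, 2, 4, 6, 11, 9]),
  ((8, 10), [8, 1, 3, 5, 2, 4, 6, 11, 9, 7, 10]),
  ((8, 11), [8, 1, 3, 5, 10, 7, 2, 4, 6, 9, 11]),
  ((9, 10), [9, 2, 4, 1, 3, 6, 11, 8, 5, 7, 10]),
  ((9, 11), [9, 2, 4, 1, 3, 5, 7, 10, 8, 6, 11]),
  ((10, 11), [10, 3, 1, 4, 2, 5, 7, 9, 6, 8, 11])]

def W12 : List ((Nat × Nat) × List Nat) := [
  ((1, 2), [1, 3, 5, 7, 4, 6, 11, 8, 10, 12, 9, 2]),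
  ((1, 3), [1, 4, 2, 5, 7, 9, 12, 10, 8, 11, 6, 3]),
  ((1, 4), [1, 3, 5, 2, 7, 9, 12, 10, 8, 6, 11, 4]),
  ((1, 5), [1, 3, 6, 4, 2, 7, 9, 11, 8, 10, 12, 5]),
  ((1, 6), [1, 3, 5, 2, 4, 7, 9, 12, 10, 8, 11, 6]),
  ((1, 7), [1, 3, 5, 2, 4, 6, 8, 11, 9, 12, 10, 7]),
  ((1, 8), [1, 3, 5, 2, 4, 6, 11, 9, 7, 12, 10, 8]),
  ((1, 9), [1, 3, 5, 2, 4, 6, 11, 8, 10, 7, 12, 9]),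
  ((1, 10), [1, 3, 5, 2, 4, 6, 8, 11, 9, 7, 12, 10]),
  ((1, 11), [1, 3, 5, 2, 4, 6, 8, 10, 7, 12, 9, 11]),
  ((1, 12), [1, 3, 5, 2, 4, 6, 8, 11, 9, 7, 10, 12]),
  ((2, 3), [2, 4, 1, 6, 8, 11, 9, 7, 5, 12, 10, 3]),
  ((2, 4), [2, 5, 3, 1, 6, 8, 10, 7, 12, 9, 11, 4]),
  ((2, 5), [2, 4, 1, 3, 6, 8, 11, 9, 7, 10, 12, 5]),
  ((2, 6), [2, 4, 1, 3, 5, 7, 9, 12, 10, 8, 11, 6]),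
  ((2, 7), [2, 4, 1, 3, 5, 8, 6, 11, 9, 12, 10, 7]),
  ((2, 8), [2, 4, 1, 3, 5, 7, 10, 12, 9, 6, 11, 8]),
  ((2, 9), [2, 4, 1, 3, 5, 7, 12, 10, 8, 6, 11, 9]),
  ((2, 10), [2, 4, 1, 3, 5, 7, 12, 9, 6, 11, 8, 10]),
  ((2, 11), [2, 4, 1, 3, 5, 7, 9, 12, 10, 8, 6, 11]),
  ((2, 12), [2, 4, 1, 3, 5, 7, 9, 6, 11, 8, 10, 12]),
  ((3, 4), [3, 1, 6, 8, 5, 2, 7, 10, 12, 9, 11, 4]),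
  ((3, 5), [3, 1, 4, 2, 7, 9, 6, 11, 8, 10, 12, 5]),
  ((3, 6), [3, 1, 4, 2, 5, 7, 9, 12, 10, 8, 11, 6]),
  ((3, 7), [3, 1, 4, 2, 5, 8, 6, 11, 9, 12, 10, 7]),
  ((3, 8), [3, 1, 4, 2, 5, 7, 10, 12, 9, 6, 11, 8]),
  ((3, 9), [3, 1, 4, 2, 5, 7, 12, 10, 8, 6, 11, 9]),
  ((3, 10), [3, 1, 4, 2, 5, 7, 12, 9, 6, 11, 8, 10]),
  ((3, 11), [3, 1, 4, 2, 5, 7, 9, 12, 10, 8, 6, 11]),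
  ((3, 12), [3, 1, 4, 2, 5, 7, 9, 6, 11, 8, 10, 12]),
  ((4, 5), [4, 1, 3, 6, 8, 11, 9, 2, 7, 10, 12, 5]),
  ((4, 6), [4, 1, 3, 5, 2, 7, 9, 12, 10, 8, 11, 6]),
  ((4, 7), [4, 1, 3, 5, 2, 9, 6, 11, 8, 10, 12, 7]),
  ((4, 8), [4, 1, 3, 5, 2, 7, 10, 12, 9, 6, 11, 8]),
  ((4, 9), [4, 1, 3, 5, 2, 7, 12, 10, 8, 6, 11, 9]),
  ((4, 10), [4, 1, 3, 5, 2, 7, 12, 9, 6, 11, 8, 10]),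
  ((4, 11), [4, 1, 3, 5, 2, 7, 9, 12, 10, 8, 6, 11]),
  ((4, 12), [4, 1, 3, 5, 2, 7, 9, 6, 11, 8, 10, 12]),
  ((5, 6), [5, 2, 4, 1, 3, 8, 10, 7, 12, 9, 11, 6]),
  ((5, 7), [5, 2, 4, 1, 3, 6, 8, 11, 9, 12, 10, 7]),
  ((5, 8), [5, 2, 4, 1, 3, 6, 11, 9, 7, 12, 10, 8]),
  ((5, 9), [5, 2, 4, 1, 3, 6, 11, 8, 10, 7, 12, 9]),
  ((5, 10), [5, 2, 4, 1, 3, 6, 8, 11, 9, 7, 12, 10]),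
  ((5, 11), [5, 2, 4, 1, 3, 6, 8, 10, 7, 12, 9, 11]),
  ((5, 12), [5, 2, 4, 1, 3, 6, 8, 11, 9, 7, 10, 12]),
  ((6, 7), [6, 1, 3, 5, 2, 4, 9, 11, 8, 10, 12, 7]),
  ((6, 8), [6, 1, 3, 5, 2, 4, 7, 10, 12, 9, 11, 8]),
  ((6, 9), [6, 1, 3, 5, 2, 4, 7, 12, 10, 8, 11, 9]),
  ((6, 10), [6, 1, 3, 5, 2, 4, 7, 12, 9, 11, 8, 10]),
  ((6, 11), [6, 1, 3, 5, 2, 4, 7, 9, 12, 10, 8, 11]),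
  ((6, 12), [6, 1, 3, 5, 2, 4, 7, 9, 11, 8, 10, 12]),
  ((7, 8), [7, 2, 4, 1, 3, 5, 10, 12, 9, 6, 11, 8]),
  ((7, 9), [7, 2, 4, 1, 3, 5, 12, 10, 8, 6, 11, 9]),
  ((7, 10), [7, 2, 4, 1, 3, 5, 8, 6, 11, 9, 12, 10]),
  ((7, 11), [7, 2, 4, 1, 3, 5, 8, 10, 12, 9, 6, 11]),
  ((7, 12), [7, 2, 4, 1, 3, 5, 10, 8, 6, 11, 9, 12]),
  ((8, 9), [8, 1, 3, 5, 10, 12, 7, 2, 4, 6, 11, 9]),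
  ((8, 10), [8, 1, 3, 5, 2, 4, 6, 11, 9, 7, 12, 10]),
  ((8, 11), [8, 1, 3, 5, 2, 4, 7, 10, 12, 9, 6, 11]),
  ((8, 12), [8, 1, 3, 5, 2, 4, 6, 11, 9, 7, 10, 12]),
  ((9, 10), [9, 2, 4, 1, 3, 6, 11, 8, 5, 7, 12, 10]),
  ((9, 11), [9, 2, 4, 1, 3, 5, 7, 12, 10, 8, 6, 11]),
  ((9, 12), [9, 2, 4, 1, 3, 6, 11, 8, 5, 7, 10, 12]),
  ((10, 11), [10, 3, 1, 4, 2, 5, 7, 12, 9, 6, 8, 11]),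
  ((10, 12), [10, 3, 1, 4, 2, 5, 8, 6, 11, 9, 7, 12]),
  ((11, 12), [11, 4, 1, 3, 5, 2, 7, 9, 6, 8, 10, 12])]

def W13 : List ((Nat × Nat) × List Nat) := [
  ((1, 2), [1, 3, 5, 7, 4, 6, 8, 10, 12, 9, 11, 13, 2]),
  ((1, 3), [1, 4, 2, 5, 7, 9, 12, 10, 8, 11, 13, 6, 3]),
  ((1, 4), [1, 3, 5, 2, 7, 9, 12, 10, 8, 6, 13, 11, 4]),
  ((1, 5), [1, 3, 6, 4, 2, 7, 9, 11, 8, 13, 10, 12, 5]),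
  ((1, 6), [1, 3, 5, 2, 4, 7, 9, 12, 10, 8, 11, 13, 6]),
  ((1, 7), [1, 3, 5, 2, 4, 6, 8, 10, 13, 11, 9, 12, 7]),
  ((1, 8), [1, 3, 5, 2, 4, 6, 9, 7, 12, 10, 13, 11, 8]),
  ((1, 9), [1, 3, 5, 2, 4, 6, 8, 11, 13, 10, 7, 12, 9]),
  ((1, 10), [1, 3, 5, 2, 4, 6, 8, 13, 11, 9, 7, 12, 10]),
  ((1, 11), [1, 3, 5, 2, 4, 6, 8, 13, 10, 7, 12, 9, 11]),
  ((1, 12), [1, 3, 5, 2, 4, 6, 8, 10, 13, 11, 9, 7, 12]),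
  ((1, 13), [1, 3, 5, 2, 4, 6, 8, 10, 7, 12, 9, 11, 13]),
  ((2, 3), [2, 4, 1, 6, 8, 5, 7, 12, 9, 11, 13, 10, 3]),
  ((2, 4), [2, 5, 3, 1, 6, 8, 10, 13, 11, 9, 12, 7, 4]),
  ((2, 5), [2, 4, 1, 3, 6, 8, 10, 13, 11, 9, 7, 12, 5]),
  ((2, 6), [2, 4, 1, 3, 5, 7, 9, 12, 10, 8, 11, 13, 6]),
  ((2, 7), [2, 4, 1, 3, 5, 8, 6, 9, 11, 13, 10, 12, 7]),
  ((2, 8), [2, 4, 1, 3, 5, 7, 9, 12, 10, 13, 6, 11, 8]),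
  ((2, 9), [2, 4, 1, 3, 5, 7, 12, 10, 8, 6, 13, 11, 9]),
  ((2, 10), [2, 4, 1, 3, 5, 7, 12, 9, 6, 8, 11, 13, 10]),
  ((2, 11), [2, 4, 1, 3, 5, 7, 9, 12, 10, 8, 6, 13, 11]),
  ((2, 12), [2, 4, 1, 3, 5, 7, 9, 6, 8, 11, 13, 10, 12]),
  ((2, 13), [2, 4, 1, 3, 5, 7, 9, 12, 10, 8, 6, 11, 13]),
  ((3, 4), [3, 1, 6, 8, 5, 2, 7, 9, 12, 10, 13, 11, 4]),
  ((3, 5), [3, 1, 4, 2, 7, 9, 6, 8, 11, 13, 10, 12, 5]),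
  ((3, 6), [3, 1, 4, 2, 5, 7, 9, 12, 10, 8, 11, 13, 6]),
  ((3, 7), [3, 1, 4, 2, 5, 8, 6, 9, 11, 13, 10, 12, 7]),
  ((3, 8), [3, 1, 4, 2, 5, 7, 9, 12, 10, 13, 6, 11, 8]),
  ((3, 9), [3, 1, 4, 2, 5, 7, 12, 10, 8, 6, 13, 11, 9]),
  ((3, 10), [3, 1, 4, 2, 5, 7, 12, 9, 6, 8, 11, 13, 10]),
  ((3, 11), [3, 1, 4, 2, 5, 7, 9, 12, 10, 8, 6, 13, 11]),
  ((3, 12), [3, 1, 4, 2, 5, 7, 9, 6, 8, 11, 13, 10, 12]),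
  ((3, 13), [3, 1, 4, 2, 5, 7, 9, 12, 10, 8, 6, 11, 13]),
  ((4, 5), [4, 1, 3, 6, 8, 10, 7, 2, 13, 11, 9, 12, 5]),
  ((4, 6), [4, 1, 3, 5, 2, 7, 9, 12, 10, 8, 11, 13, 6]),
  ((4, 7), [4, 1, 3, 5, 2, 9, 6, 8, 11, 13, 10, 12, 7]),
  ((4, 8), [4, 1, 3, 5, 2, 7, 9, 12, 10, 13, 6, 11, 8]),
  ((4, 9), [4, 1, 3, 5, 2, 7, 12, 10, 8, 6, 13, 11, 9]),
  ((4, 10), [4, 1, 3, 5, 2, 7, 12, 9, 6, 8, 11, 13, 10]),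
  ((4, 11), [4, 1, 3, 5, 2, 7, 9, 12, 10, 8, 6, 13, 11]),
  ((4, 12), [4, 1, 3, 5, 2, 7, 9, 6, 8, 11, 13, 10, 12]),
  ((4, 13), [4, 1, 3, 5, 2, 7, 9, 12, 10, 8, 6, 11, 13]),
  ((5, 6), [5, 2, 4, 1, 3, 8, 10, 7, 12, 9, 11, 13, 6]),
  ((5, 7), [5, 2, 4, 1, 3, 6, 8, 10, 13, 11, 9, 12, 7]),
  ((5, 8), [5, 2, 4, 1, 3, 6, 9, 7, 12, 10, 13, 11, 8]),
  ((5, 9), [5, 2, 4, 1, 3, 6, 8, 11, 13, 10, 7, 12, 9]),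
  ((5, 10), [5, 2, 4, 1, 3, 6, 8, 13, 11, 9, 7, 12, 10]),
  ((5, 11), [5, 2, 4, 1, 3, 6, 8, 13, 10, 7, 12, 9, 11]),
  ((5, 12), [5, 2, 4, 1, 3, 6, 8, 10, 13, 11, 9, 7, 12]),
  ((5, 13), [5, 2, 4, 1, 3, 6, 8, 10, 7, 12, 9, 11, 13]),
  ((6, 7), [6, 1, 3, 5, 2, 4, 9, 11, 8, 13, 10, 12, 7]),
  ((6, 8), [6, 1, 3, 5, 2, 4, 7, 9, 12, 10, 13, 11, 8]),
  ((6, 9), [6, 1, 3, 5, 2, 4, 7, 12, 10, 8, 13, 11, 9]),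
  ((6, 10), [6, 1, 3, 5, 2, 4, 7, 12, 9, 11, 8, 13, 10]),
  ((6, 11), [6, 1, 3, 5, 2, 4, 7, 9, 12, 10, 8, 13, 11]),
  ((6, 12), [6, 1, 3, 5, 2, 4, 7, 9, 11, 8, 13, 10, 12]),
  ((6, 13), [6, 1, 3, 5, 2, 4, 7, 9, 12, 10, 8, 11, 13]),
  ((7, 8), [7, 2, 4, 1, 3, 5, 10, 12, 9, 6, 11, 13, 8]),
  ((7, 9), [7, 2, 4, 1, 3, 5, 8, 6, 11, 13, 10, 12, 9]),
  ((7, 10), [7, 2, 4, 1, 3, 5, 8, 6, 13, 11, 9, 12, 10]),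
  ((7, 11), [7, 2, 4, 1, 3, 5, 8, 6, 9, 12, 10, 13, 11]),
  ((7, 12), [7, 2, 4, 1, 3, 5, 8, 6, 9, 11, 13, 10, 12]),
  ((7, 13), [7, 2, 4, 1, 3, 5, 8, 6, 11, 9, 12, 10, 13]),
  ((8, 9), [8, 1, 3, 5, 2, 4, 6, 11, 13, 10, 7, 12, 9]),
  ((8, 10), [8, 1, 3, 5, 2, 4, 6, 13, 11, 9, 7, 12, 10]),
  ((8, 11), [8, 1, 3, 5, 2, 4, 6, 9, 7, 12, 10, 13, 11]),
  ((8, 12), [8, 1, 3, 5, 2, 4, 6, 9, 11, 13, 10, 7, 12]),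
  ((8, 13), [8, 1, 3, 5, 2, 4, 6, 11, 9, 7, 12, 10, 13]),
  ((9, 10), [9, 2, 4, 1, 3, 6, 11, 13, 8, 5, 7, 12, 10]),
  ((9, 11), [9, 2, 4, 1, 3, 5, 7, 12, 10, 8, 6, 13, 11]),
  ((9, 12), [9, 2, 4, 1, 3, 5, 8, 6, 11, 13, 10, 7, 12]),
  ((9, 13), [9, 2, 4, 1, 3, 5, 7, 12, 10, 8, 6, 11, 13]),
  ((10, 11), [10, 3, 1, 4, 2, 5, 7, 12, 9, 6, 8, 13, 11]),
  ((10, 12), [10, 3, 1, 4, 2, 5, 8, 6, 13, 11, 9, 7, 12]),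
  ((10, 13), [10, 3, 1, 4, 2, 5, 7, 12, 9, 6, 8, 11, 13]),
  ((11, 12), [11, 4, 1, 3, 5, 2, 7, 9, 6, 8, 13, 10, 12]),
  ((11, 13), [11, 4, 1, 3, 5, 2, 7, 9, 12, 10, 8, 6, 13]),
  ((12, 13), [12, 1, 3, 5, 2, 4, 6, 8, 10, 7, 9, 11, 13])]

def W14 : List ((Nat × Nat) × List Nat) := [
  ((1, 2), [1, 3, 5, 7, 4, 6, 8, 10, 12, 9, 14, 11, 13, 2]),
  ((1, 3), [1, 4, 2, 5, 7, 9, 6, 8, 11, 13, 10, 12, 14, 3]),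
  ((1, 4), [1, 3, 5, 2, 7, 9, 6, 8, 13, 10, 12, 14, 11, 4]),
  ((1, 5), [1, 3, 6, 4, 2, 7, 9, 11, 14, 12, 10, 13, 8, 5]),
  ((1, 6), [1, 3, 5, 2, 4, 7, 9, 11, 14, 12, 10, 8, 13, 6]),
  ((1, 7), [1, 3, 5, 2, 4, 6, 8, 10, 13, 11, 9, 12, 14, 7]),
  ((1, 8), [1, 3, 5, 2, 4, 6, 9, 7, 10, 12, 14, 11, 13, 8]),
  ((1, 9), [1, 3, 5, 2, 4, 6, 8, 10, 13, 11, 14, 7, 12, 9]),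
  ((1, 10), [1, 3, 5, 2, 4, 6, 8, 13, 11, 9, 7, 14, 12, 10]),
  ((1, 11), [1, 3, 5, 2, 4, 6, 8, 13, 10, 7, 9, 12, 14, 11]),
  ((1, 12), [1, 3, 5, 2, 4, 6, 8, 10, 13, 11, 9, 7, 14, 12]),
  ((1, 13), [1, 3, 5, 2, 4, 6, 8, 10, 7, 9, 12, 14, 11, 13]),
  ((1, 14), [1, 3, 5, 2, 4, 6, 8, 10, 13, 11, 9, 7, 12, 14]),
  ((2, 3), [2, 4, 1, 6, 8, 5, 7, 9, 11, 13, 10, 12, 14, 3]),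
  ((2, 4), [2, 5, 3, 1, 6, 8, 10, 13, 11, 9, 12, 14, 7, 4]),
  ((2, 5), [2, 4, 1, 3, 6, 8, 10, 13, 11, 9, 7, 14, 12, 5]),
  ((2, 6), [2, 4, 1, 3, 5, 7, 9, 11, 14, 12, 10, 8, 13, 6]),
  ((2, 7), [2, 4, 1, 3, 5, 8, 6, 9, 11, 13, 10, 12, 14, 7]),
  ((2, 8), [2, 4, 1, 3, 5, 7, 9, 6, 11, 14, 12, 10, 13, 8]),
  ((2, 9), [2, 4, 1, 3, 5, 7, 10, 8, 6, 13, 11, 14, 12, 9]),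
  ((2, 10), [2, 4, 1, 3, 5, 7, 9, 6, 8, 13, 11, 14, 12, 10]),
  ((2, 11), [2, 4, 1, 3, 5, 7, 9, 6, 8, 13, 10, 12, 14, 11]),
  ((2, 12), [2, 4, 1, 3, 5, 7, 9, 6, 8, 10, 13, 11, 14, 12]),
  ((2, 13), [2, 4, 1, 3, 5, 7, 9, 6, 8, 10, 12, 14, 11, 13]),
  ((2, 14), [2, 4, 1, 3, 5, 7, 9, 6, 8, 11, 13, 10, 12, 14]),
  ((3, 4), [3, 1, 6, 8, 5, 2, 7, 9, 14, 12, 10, 13, 11, 4]),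
  ((3, 5), [3, 1, 4, 2, 7, 9, 6, 8, 10, 13, 11, 14, 12, 5]),
  ((3, 6), [3, 1, 4, 2, 5, 7, 9, 11, 14, 12, 10, 8, 13, 6]),
  ((3, 7), [3, 1, 4, 2, 5, 8, 6, 9, 11, 13, 10, 12, 14, 7]),
  ((3, 8), [3, 1, 4, 2, 5, 7, 9, 6, 11, 14, 12, 10, 13, 8]),
  ((3, 9), [3, 1, 4, 2, 5, 7, 10, 8, 6, 13, 11, 14, 12, 9]),
  ((3, 10), [3, 1, 4, 2, 5, 7, 9, 6, 8, 13, 11, 14, 12, 10]),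
  ((3, 11), [3, 1, 4, 2, 5, 7, 9, 6, 8, 13, 10, 12, 14, 11]),
  ((3, 12), [3, 1, 4, 2, 5, 7, 9, 6, 8, 10, 13, 11, 14, 12]),
  ((3, 13), [3, 1, 4, 2, 5, 7, 9, 6, 8, 10, 12, 14, 11, 13]),
  ((3, 14), [3, 1, 4, 2, 5, 7, 9, 6, 8, 11, 13, 10, 12, 14]),
  ((4, 5), [4, 1, 3, 6, 8, 10, 7, 2, 13, 11, 9, 14, 12, 5]),
  ((4, 6), [4, 1, 3, 5, 2, 7, 9, 11, 14, 12, 10, 8, 13, 6]),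
  ((4, 7), [4, 1, 3, 5, 2, 9, 6, 8, 10, 13, 11, 14, 12, 7]),
  ((4, 8), [4, 1, 3, 5, 2, 7, 9, 6, 11, 14, 12, 10, 13, 8]),
  ((4, 9), [4, 1, 3, 5, 2, 7, 10, 8, 6, 13, 11, 14, 12, 9]),
  ((4, 10), [4, 1, 3, 5, 2, 7, 9, 6, 8, 13, 11, 14, 12, 10]),
  ((4, 11), [4, 1, 3, 5, 2, 7, 9, 6, 8, 13, 10, 12, 14, 11]),
  ((4, 12), [4, 1, 3, 5, 2, 7, 9, 6, 8, 10, 13, 11, 14, 12]),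
  ((4, 13), [4, 1, 3, 5, 2, 7, 9, 6, 8, 10, 12, 14, 11, 13]),
  ((4, 14), [4, 1, 3, 5, 2, 7, 9, 6, 8, 11, 13, 10, 12, 14]),
  ((5, 6), [5, 2, 4, 1, 3, 8, 10, 7, 9, 12, 14, 11, 13, 6]),
  ((5, 7), [5, 2, 4, 1, 3, 6, 8, 10, 13, 11, 9, 12, 14, 7]),
  ((5, 8), [5, 2, 4, 1, 3, 6, 9, 7, 10, 12, 14, 11, 13, 8]),
  ((5, 9), [5, 2, 4, 1, 3, 6, 8, 10, 13, 11, 14, 7, 12, 9]),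
  ((5, 10), [5, 2, 4, 1, 3, 6, 8, 13, 11, 9, 7, 14, 12, 10]),
  ((5, 11), [5, 2, 4, 1, 3, 6, 8, 13, 10, 7, 9, 12, 14, 11]),
  ((5, 12), [5, 2, 4, 1, 3, 6, 8, 10, 13, 11, 9, 7, 14, 12]),
  ((5, 13), [5, 2, 4, 1, 3, 6, 8, 10, 7, 9, 12, 14, 11, 13]),
  ((5, 14), [5, 2, 4, 1, 3, 6, 8, 10, 13, 11, 9, 7, 12, 14]),
  ((6, 7), [6, 1, 3, 5, 2, 4, 9, 11, 8, 13, 10, 12, 14, 7]),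
  ((6, 8), [6, 1, 3, 5, 2, 4, 7, 9, 11, 14, 12, 10, 13, 8]),
  ((6, 9), [6, 1, 3, 5, 2, 4, 7, 10, 8, 13, 11, 14, 12, 9]),
  ((6, 10), [6, 1, 3, 5, 2, 4, 7, 9, 12, 14, 11, 8, 13, 10]),
  ((6, 11), [6, 1, 3, 5, 2, 4, 7, 9, 14, 12, 10, 8, 13, 11]),
  ((6, 12), [6, 1, 3, 5, 2, 4, 7, 9, 14, 11, 8, 13, 10, 12]),
  ((6, 13), [6, 1, 3, 5, 2, 4, 7, 9, 11, 14, 12, 10, 8, 13]),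
  ((6, 14), [6, 1, 3, 5, 2, 4, 7, 9, 11, 8, 13, 10, 12, 14]),
  ((7, 8), [7, 2, 4, 1, 3, 5, 10, 12, 9, 14, 11, 6, 13, 8]),
  ((7, 9), [7, 2, 4, 1, 3, 5, 8, 6, 11, 13, 10, 12, 14, 9]),
  ((7, 10), [7, 2, 4, 1, 3, 5, 8, 6, 9, 12, 14, 11, 13, 10]),
  ((7, 11), [7, 2, 4, 1, 3, 5, 8, 6, 9, 14, 12, 10, 13, 11]),
  ((7, 12), [7, 2, 4, 1, 3, 5, 8, 6, 9, 14, 11, 13, 10, 12]),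
  ((7, 13), [7, 2, 4, 1, 3, 5, 8, 6, 9, 11, 14, 12, 10, 13]),
  ((7, 14), [7, 2, 4, 1, 3, 5, 8, 6, 9, 11, 13, 10, 12, 14]),
  ((8, 9), [8, 1, 3, 5, 2, 4, 6, 11, 13, 10, 7, 12, 14, 9]),
  ((8, 10), [8, 1, 3, 5, 2, 4, 6, 9, 7, 12, 14, 11, 13, 10]),
  ((8, 11), [8, 1, 3, 5, 2, 4, 6, 9, 7, 14, 12, 10, 13, 11]),
  ((8, 12), [8, 1, 3, 5, 2, 4, 6, 9, 7, 10, 13, 11, 14, 12]),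
  ((8, 13), [8, 1, 3, 5, 2, 4, 6, 9, 7, 10, 12, 14, 11, 13]),
  ((8, 14), [8, 1, 3, 5, 2, 4, 6, 9, 7, 12, 10, 13, 11, 14]),
  ((9, 10), [9, 2, 4, 1, 3, 5, 7, 12, 14, 11, 6, 8, 13, 10]),
  ((9, 11), [9, 2, 4, 1, 3, 5, 7, 14, 12, 10, 8, 6, 13, 11]),
  ((9, 12), [9, 2, 4, 1, 3, 5, 7, 10, 8, 6, 13, 11, 14, 12]),
  ((9, 13), [9, 2, 4, 1, 3, 5, 7, 10, 12, 14, 11, 6, 8, 13]),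
  ((9, 14), [9, 2, 4, 1, 3, 5, 7, 12, 10, 8, 6, 13, 11, 14]),
  ((10, 11), [10, 3, 1, 4, 2, 5, 7, 12, 14, 9, 6, 8, 13, 11]),
  ((10, 12), [10, 3, 1, 4, 2, 5, 7, 9, 6, 8, 13, 11, 14, 12]),
  ((10, 13), [10, 3, 1, 4, 2, 5, 7, 9, 12, 14, 11, 6, 8, 13]),
  ((10, 14), [10, 3, 1, 4, 2, 5, 7, 12, 9, 6, 8, 13, 11, 14]),
  ((11, 12), [11, 4, 1, 3, 5, 2, 7, 10, 8, 13, 6, 9, 14, 12]),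
  ((11, 13), [11, 4, 1, 3, 5, 2, 7, 9, 14, 12, 10, 8, 6, 13]),
  ((11, 14), [11, 4, 1, 3, 5, 2, 7, 9, 6, 8, 13, 10, 12, 14]),
  ((12, 13), [12, 1, 3, 5, 2, 4, 6, 8, 10, 7, 9, 14, 11, 13]),
  ((12, 14), [12, 1, 3, 5, 2, 4, 6, 8, 10, 13, 11, 9, 7, 14]),
  ((13, 14), [13, 2, 4, 1, 3, 5, 7, 9, 6, 11, 8, 10, 12, 14])]

def W15 : List ((Nat × Nat) × List Nat) := [
  ((1, 2), [1, 3, 5, 7, 4, 6, 8, 10, 12, 9, 14, 11, 13, 15, 2]),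
  ((1, 3), [1, 4, 2, 5, 7, 9, 6, 8, 10, 12, 15, 13, 11, 14, 3]),
  ((1, 4), [1, 3, 5, 2, 7, 9, 6, 8, 10, 12, 14, 11, 13, 15, 4]),
  ((1, 5), [1, 3, 6, 4, 2, 7, 9, 11, 14, 12, 10, 13, 15, 8, 5]),
  ((1, 6), [1, 3, 5, 2, 4, 7, 9, 11, 14, 12, 10, 8, 15, 13, 6]),
  ((1, 7), [1, 3, 5, 2, 4, 6, 8, 10, 12, 15, 13, 11, 9, 14, 7]),
  ((1, 8), [1, 3, 5, 2, 4, 6, 9, 7, 10, 12, 14, 11, 13, 15, 8]),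
  ((1, 9), [1, 3, 5, 2, 4, 6, 8, 10, 7, 12, 15, 13, 11, 14, 9]),
  ((1, 10), [1, 3, 5, 2, 4, 6, 8, 11, 9, 7, 14, 12, 15, 13, 10]),
  ((1, 11), [1, 3, 5, 2, 4, 6, 8, 10, 7, 9, 14, 12, 15, 13, 11]),
  ((1, 12), [1, 3, 5, 2, 4, 6, 8, 10, 7, 9, 14, 11, 13, 15, 12]),
  ((1, 13), [1, 3, 5, 2, 4, 6, 8, 10, 7, 9, 11, 14, 12, 15, 13]),
  ((1, 14), [1, 3, 5, 2, 4, 6, 8, 10, 7, 9, 11, 13, 15, 12, 14]),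
  ((1, 15), [1, 3, 5, 2, 4, 6, 8, 10, 7, 9, 12, 14, 11, 13, 15]),
  ((2, 3), [2, 4, 1, 6, 8, 5, 7, 9, 11, 13, 10, 15, 12, 14, 3]),
  ((2, 4), [2, 5, 3, 1, 6, 8, 10, 7, 9, 12, 14, 11, 13, 15, 4]),
  ((2, 5), [2, 4, 1, 3, 6, 8, 10, 7, 9, 14, 11, 13, 15, 12, 5]),
  ((2, 6), [2, 4, 1, 3, 5, 7, 9, 11, 14, 12, 10, 8, 15, 13, 6]),
  ((2, 7), [2, 4, 1, 3, 5, 8, 6, 9, 11, 13, 10, 15, 12, 14, 7]),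
  ((2, 8), [2, 4, 1, 3, 5, 7, 9, 6, 11, 14, 12, 10, 13, 15, 8]),
  ((2, 9), [2, 4, 1, 3, 5, 7, 10, 8, 6, 11, 13, 15, 12, 14, 9]),
  ((2, 10), [2, 4, 1, 3, 5, 7, 9, 6, 8, 11, 14, 12, 15, 13, 10]),
  ((2, 11), [2, 4, 1, 3, 5, 7, 9, 6, 8, 10, 13, 15, 12, 14, 11]),
  ((2, 12), [2, 4, 1, 3, 5, 7, 9, 6, 8, 10, 15, 13, 11, 14, 12]),
  ((2, 13), [2, 4, 1, 3, 5, 7, 9, 6, 8, 10, 15, 12, 14, 11, 13]),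
  ((2, 14), [2, 4, 1, 3, 5, 7, 9, 6, 8, 10, 12, 15, 13, 11, 14]),
  ((2, 15), [2, 4, 1, 3, 5, 7, 9, 6, 8, 10, 12, 14, 11, 13, 15]),
  ((3, 4), [3, 1, 6, 8, 5, 2, 7, 9, 11, 14, 12, 10, 13, 15, 4]),
  ((3, 5), [3, 1, 4, 2, 7, 9, 6, 8, 10, 15, 13, 11, 14, 12, 5]),
  ((3, 6), [3, 1, 4, 2, 5, 7, 9, 11, 14, 12, 10, 8, 15, 13, 6]),
  ((3, 7), [3, 1, 4, 2, 5, 8, 6, 9, 11, 13, 10, 15, 12, 14, 7]),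
  ((3, 8), [3, 1, 4, 2, 5, 7, 9, 6, 11, 14, 12, 10, 13, 15, 8]),
  ((3, 9), [3, 1, 4, 2, 5, 7, 10, 8, 6, 11, 13, 15, 12, 14, 9]),
  ((3, 10), [3, 1, 4, 2, 5, 7, 9, 6, 8, 11, 14, 12, 15, 13, 10]),
  ((3, 11), [3, 1, 4, 2, 5, 7, 9, 6, 8, 10, 13, 15, 12, 14, 11]),
  ((3, 12), [3, 1, 4, 2, 5, 7, 9, 6, 8, 10, 15, 13, 11, 14, 12]),
  ((3, 13), [3, 1, 4, 2, 5, 7, 9, 6, 8, 10, 15, 12, 14, 11, 13]),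
  ((3, 14), [3, 1, 4, 2, 5, 7, 9, 6, 8, 10, 12, 15, 13, 11, 14]),
  ((3, 15), [3, 1, 4, 2, 5, 7, 9, 6, 8, 10, 12, 14, 11, 13, 15]),
  ((4, 5), [4, 1, 3, 6, 8, 10, 7, 2, 9, 14, 11, 13, 15, 12, 5]),
  ((4, 6), [4, 1, 3, 5, 2, 7, 9, 11, 14, 12, 10, 8, 15, 13, 6]),
  ((4, 7), [4, 1, 3, 5, 2, 9, 6, 8, 10, 12, 15, 13, 11, 14, 7]),
  ((4, 8), [4, 1, 3, 5, 2, 7, 9, 6, 11, 14, 12, 10, 13, 15, 8]),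
  ((4, 9), [4, 1, 3, 5, 2, 7, 10, 8, 6, 11, 13, 15, 12, 14, 9]),
  ((4, 10), [4, 1, 3, 5, 2, 7, 9, 6, 8, 11, 14, 12, 15, 13, 10]),
  ((4, 11), [4, 1, 3, 5, 2, 7, 9, 6, 8, 10, 13, 15, 12, 14, 11]),
  ((4, 12), [4, 1, 3, 5, 2, 7, 9, 6, 8, 10, 15, 13, 11, 14, 12]),
  ((4, 13), [4, 1, 3, 5, 2, 7, 9, 6, 8, 10, 15, 12, 14, 11, 13]),
  ((4, 14), [4, 1, 3, 5, 2, 7, 9, 6, 8, 10, 12, 15, 13, 11, 14]),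
  ((4, 15), [4, 1, 3, 5, 2, 7, 9, 6, 8, 10, 12, 14, 11, 13, 15]),
  ((5, 6), [5, 2, 4, 1, 3, 8, 10, 7, 9, 11, 14, 12, 15, 13, 6]),
  ((5, 7), [5, 2, 4, 1, 3, 6, 8, 10, 12, 15, 13, 11, 9, 14, 7]),
  ((5, 8), [5, 2, 4, 1, 3, 6, 9, 7, 10, 12, 14, 11, 13, 15, 8]),
  ((5, 9), [5, 2, 4, 1, 3, 6, 8, 10, 7, 12, 15, 13, 11, 14, 9]),
  ((5, 10), [5, 2, 4, 1, 3, 6, 8, 11, 9, 7, 14, 12, 15, 13, 10]),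
  ((5, 11), [5, 2, 4, 1, 3, 6, 8, 10, 7, 9, 14, 12, 15, 13, 11]),
  ((5, 12), [5, 2, 4, 1, 3, 6, 8, 10, 7, 9, 14, 11, 13, 15, 12]),
  ((5, 13), [5, 2, 4, 1, 3, 6, 8, 10, 7, 9, 11, 14, 12, 15, 13]),
  ((5, 14), [5, 2, 4, 1, 3, 6, 8, 10, 7, 9, 11, 13, 15, 12, 14]),
  ((5, 15), [5, 2, 4, 1, 3, 6, 8, 10, 7, 9, 12, 14, 11, 13, 15]),
  ((6, 7), [6, 1, 3, 5, 2, 4, 9, 11, 8, 10, 13, 15, 12, 14, 7]),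
  ((6, 8), [6, 1, 3, 5, 2, 4, 7, 9, 11, 14, 12, 10, 13, 15, 8]),
  ((6, 9), [6, 1, 3, 5, 2, 4, 7, 10, 8, 11, 13, 15, 12, 14, 9]),
  ((6, 10), [6, 1, 3, 5, 2, 4, 7, 9, 11, 14, 12, 15, 8, 13, 10]),
  ((6, 11), [6, 1, 3, 5, 2, 4, 7, 9, 14, 12, 10, 8, 15, 13, 11]),
  ((6, 12), [6, 1, 3, 5, 2, 4, 7, 9, 14, 11, 8, 10, 13, 15, 12]),
  ((6, 13), [6, 1, 3, 5, 2, 4, 7, 9, 11, 14, 12, 10, 8, 15, 13]),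
  ((6, 14), [6, 1, 3, 5, 2, 4, 7, 9, 11, 8, 10, 13, 15, 12, 14]),
  ((6, 15), [6, 1, 3, 5, 2, 4, 7, 9, 11, 14, 12, 10, 8, 13, 15]),
  ((7, 8), [7, 2, 4, 1, 3, 5, 10, 12, 9, 14, 11, 6, 13, 15, 8]),
  ((7, 9), [7, 2, 4, 1, 3, 5, 8, 6, 11, 13, 10, 15, 12, 14, 9]),
  ((7, 10), [7, 2, 4, 1, 3, 5, 8, 6, 9, 11, 14, 12, 15, 13, 10]),
  ((7, 11), [7, 2, 4, 1, 3, 5, 8, 6, 9, 14, 12, 10, 15, 13, 11]),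
  ((7, 12), [7, 2, 4, 1, 3, 5, 8, 6, 9, 14, 11, 13, 10, 15, 12]),
  ((7, 13), [7, 2, 4, 1, 3, 5, 8, 6, 9, 11, 14, 12, 10, 15, 13]),
  ((7, 14), [7, 2, 4, 1, 3, 5, 8, 6, 9, 11, 13, 10, 15, 12, 14]),
  ((7, 15), [7, 2, 4, 1, 3, 5, 8, 6, 9, 11, 14, 12, 10, 13, 15]),
  ((8, 9), [8, 1, 3, 5, 2, 4, 6, 11, 13, 10, 15, 12, 7, 14, 9]),
  ((8, 10), [8, 1, 3, 5, 2, 4, 6, 9, 7, 12, 14, 11, 13, 15, 10]),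
  ((8, 11), [8, 1, 3, 5, 2, 4, 6, 9, 7, 10, 13, 15, 12, 14, 11]),
  ((8, 12), [8, 1, 3, 5, 2, 4, 6, 9, 7, 10, 15, 13, 11, 14, 12]),
  ((8, 13), [8, 1, 3, 5, 2, 4, 6, 9, 7, 10, 15, 12, 14, 11, 13]),
  ((8, 14), [8, 1, 3, 5, 2, 4, 6, 9, 7, 10, 12, 15, 13, 11, 14]),
  ((8, 15), [8, 1, 3, 5, 2, 4, 6, 9, 7, 10, 12, 14, 11, 13, 15]),
  ((9, 10), [9, 2, 4, 1, 3, 5, 7, 12, 14, 11, 6, 8, 13, 15, 10]),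
  ((9, 11), [9, 2, 4, 1, 3, 5, 7, 10, 8, 6, 13, 15, 12, 14, 11]),
  ((9, 12), [9, 2, 4, 1, 3, 5, 7, 10, 8, 15, 13, 6, 11, 14, 12]),
  ((9, 13), [9, 2, 4, 1, 3, 5, 7, 10, 8, 6, 11, 14, 12, 15, 13]),
  ((9, 14), [9, 2, 4, 1, 3, 5, 7, 10, 8, 6, 11, 13, 15, 12, 14]),
  ((9, 15), [9, 2, 4, 1, 3, 5, 7, 10, 8, 6, 13, 11, 14, 12, 15]),
  ((10, 11), [10, 3, 1, 4, 2, 5, 7, 9, 6, 8, 13, 15, 12, 14, 11]),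
  ((10, 12), [10, 3, 1, 4, 2, 5, 7, 9, 6, 8, 15, 13, 11, 14, 12]),
  ((10, 13), [10, 3, 1, 4, 2, 5, 7, 9, 6, 8, 11, 14, 12, 15, 13]),
  ((10, 14), [10, 3, 1, 4, 2, 5, 7, 9, 6, 8, 11, 13, 15, 12, 14]),
  ((10, 15), [10, 3, 1, 4, 2, 5, 7, 9, 6, 8, 13, 11, 14, 12, 15]),
  ((11, 12), [11, 4, 1, 3, 5, 2, 7, 10, 8, 15, 13, 6, 9, 14, 12]),
  ((11, 13), [11, 4, 1, 3, 5, 2, 7, 9, 14, 12, 10, 15, 8, 6, 13]),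
  ((11, 14), [11, 4, 1, 3, 5, 2, 7, 9, 6, 8, 10, 13, 15, 12, 14]),
  ((11, 15), [11, 4, 1, 3, 5, 2, 7, 9, 14, 12, 10, 8, 6, 13, 15]),
  ((12, 13), [12, 1, 3, 5, 2, 4, 6, 8, 11, 9, 14, 7, 10, 15, 13]),
  ((12, 14), [12, 1, 3, 5, 2, 4, 6, 8, 10, 15, 13, 11, 9, 7, 14]),
  ((12, 15), [12, 1, 3, 5, 2, 4, 6, 8, 10, 7, 9, 14, 11, 13, 15]),
  ((13, 14), [13, 2, 4, 1, 3, 5, 7, 9, 6, 11, 8, 10, 15, 12, 14]),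
  ((13, 15), [13, 2, 4, 1, 3, 5, 7, 9, 6, 8, 11, 14, 12, 10, 15]),
  ((14, 15), [14, 1, 3, 5, 2, 4, 6, 8, 10, 7, 12, 9, 11, 13, 15])]

def W16 : List ((Nat × Nat) × List Nat) := [
  ((1, 2), [1, 3, 5, 7, 4, 6, 8, 10, 12, 9, 11, 14, 16, 13, 15, 2]),
  ((1, 3), [1, 4, 2, 5, 7, 9, 6, 8, 10, 12, 15, 13, 11, 14, 16, 3]),
  ((1, 4), [1, 3, 5, 2, 7, 9, 6, 8, 10, 12, 14, 11, 16, 13, 15, 4]),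
  ((1, 5), [1, 3, 6, 4, 2, 7, 9, 11, 8, 10, 13, 15, 12, 14, 16, 5]),
  ((1, 6), [1, 3, 5, 2, 4, 7, 9, 11, 8, 10, 15, 12, 14, 16, 13, 6]),
  ((1, 7), [1, 3, 5, 2, 4, 6, 8, 10, 12, 15, 13, 11, 9, 16, 14, 7]),
  ((1, 8), [1, 3, 5, 2, 4, 6, 9, 7, 10, 12, 14, 11, 16, 13, 15, 8]),
  ((1, 9), [1, 3, 5, 2, 4, 6, 8, 10, 7, 12, 15, 13, 11, 14, 16, 9]),
  ((1, 10), [1, 3, 5, 2, 4, 6, 8, 11, 9, 7, 12, 14, 16, 13, 15, 10]),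
  ((1, 11), [1, 3, 5, 2, 4, 6, 8, 10, 7, 9, 12, 15, 13, 16, 14, 11]),
  ((1, 12), [1, 3, 5, 2, 4, 6, 8, 10, 7, 9, 11, 14, 16, 13, 15, 12]),
  ((1, 13), [1, 3, 5, 2, 4, 6, 8, 10, 7, 9, 11, 16, 14, 12, 15, 13]),
  ((1, 14), [1, 3, 5, 2, 4, 6, 8, 10, 7, 9, 11, 16, 13, 15, 12, 14]),
  ((1, 15), [1, 3, 5, 2, 4, 6, 8, 10, 7, 9, 11, 13, 16, 14, 12, 15]),
  ((1, 16), [1, 3, 5, 2, 4, 6, 8, 10, 7, 9, 11, 13, 15, 12, 14, 16]),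
  ((2, 3), [2, 4, 1, 6, 8, 5, 7, 9, 11, 13, 10, 15, 12, 14, 16, 3]),
  ((2, 4), [2, 5, 3, 1, 6, 8, 10, 7, 9, 11, 13, 16, 14, 12, 15, 4]),
  ((2, 5), [2, 4, 1, 3, 6, 8, 10, 7, 9, 11, 13, 15, 12, 14, 16, 5]),
  ((2, 6), [2, 4, 1, 3, 5, 7, 9, 11, 8, 10, 15, 12, 14, 16, 13, 6]),
  ((2, 7), [2, 4, 1, 3, 5, 8, 6, 9, 11, 13, 16, 14, 12, 15, 10, 7]),
  ((2, 8), [2, 4, 1, 3, 5, 7, 9, 6, 11, 13, 16, 14, 12, 10, 15, 8]),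
  ((2, 9), [2, 4, 1, 3, 5, 7, 10, 8, 6, 11, 13, 15, 12, 14, 16, 9]),
  ((2, 10), [2, 4, 1, 3, 5, 7, 9, 6, 8, 11, 13, 16, 14, 12, 15, 10]),
  ((2, 11), [2, 4, 1, 3, 5, 7, 9, 6, 8, 10, 12, 15, 13, 16, 14, 11]),
  ((2, 12), [2, 4, 1, 3, 5, 7, 9, 6, 8, 10, 15, 13, 11, 16, 14, 12]),
  ((2, 13), [2, 4, 1, 3, 5, 7, 9, 6, 8, 10, 15, 12, 14, 11, 16, 13]),
  ((2, 14), [2, 4, 1, 3, 5, 7, 9, 6, 8, 10, 12, 15, 13, 11, 16, 14]),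
  ((2, 15), [2, 4, 1, 3, 5, 7, 9, 6, 8, 10, 12, 14, 11, 16, 13, 15]),
  ((2, 16), [2, 4, 1, 3, 5, 7, 9, 6, 8, 10, 12, 15, 13, 11, 14, 16]),
  ((3, 4), [3, 1, 6, 8, 5, 2, 7, 9, 11, 13, 16, 14, 12, 10, 15, 4]),
  ((3, 5), [3, 1, 4, 2, 7, 9, 6, 8, 10, 12, 15, 13, 11, 14, 16, 5]),
  ((3, 6), [3, 1, 4, 2, 5, 7, 9, 11, 8, 10, 15, 12, 14, 16, 13, 6]),
  ((3, 7), [3, 1, 4, 2, 5, 8, 6, 9, 11, 13, 16, 14, 12, 15, 10, 7]),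
  ((3, 8), [3, 1, 4, 2, 5, 7, 9, 6, 11, 13, 16, 14, 12, 10, 15, 8]),
  ((3, 9), [3, 1, 4, 2, 5, 7, 10, 8, 6, 11, 13, 15, 12, 14, 16, 9]),
  ((3, 10), [3, 1, 4, 2, 5, 7, 9, 6, 8, 11, 13, 16, 14, 12, 15, 10]),
  ((3, 11), [3, 1, 4, 2, 5, 7, 9, 6, 8, 10, 12, 15, 13, 16, 14, 11]),
  ((3, 12), [3, 1, 4, 2, 5, 7, 9, 6, 8, 10, 15, 13, 11, 16, 14, 12]),
  ((3, 13), [3, 1, 4, 2, 5, 7, 9, 6, 8, 10, 15, 12, 14, 11, 16, 13]),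
  ((3, 14), [3, 1, 4, 2, 5, 7, 9, 6, 8, 10, 12, 15, 13, 11, 16, 14]),
  ((3, 15), [3, 1, 4, 2, 5, 7, 9, 6, 8, 10, 12, 14, 11, 16, 13, 15]),
  ((3, 16), [3, 1, 4, 2, 5, 7, 9, 6, 8, 10, 12, 15, 13, 11, 14, 16]),
  ((4, 5), [4, 1, 3, 6, 8, 10, 7, 2, 9, 11, 13, 15, 12, 14, 16, 5]),
  ((4, 6), [4, 1, 3, 5, 2, 7, 9, 11, 8, 10, 15, 12, 14, 16, 13, 6]),
  ((4, 7), [4, 1, 3, 5, 2, 9, 6, 8, 10, 12, 15, 13, 11, 16, 14, 7]),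
  ((4, 8), [4, 1, 3, 5, 2, 7, 9, 6, 11, 13, 16, 14, 12, 10, 15, 8]),
  ((4, 9), [4, 1, 3, 5, 2, 7, 10, 8, 6, 11, 13, 15, 12, 14, 16, 9]),
  ((4, 10), [4, 1, 3, 5, 2, 7, 9, 6, 8, 11, 13, 16, 14, 12, 15, 10]),
  ((4, 11), [4, 1, 3, 5, 2, 7, 9, 6, 8, 10, 12, 15, 13, 16, 14, 11]),
  ((4, 12), [4, 1, 3, 5, 2, 7, 9, 6, 8, 10, 15, 13, 11, 16, 14, 12]),
  ((4, 13), [4, 1, 3, 5, 2, 7, 9, 6, 8, 10, 15, 12, 14, 11, 16, 13]),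
  ((4, 14), [4, 1, 3, 5, 2, 7, 9, 6, 8, 10, 12, 15, 13, 11, 16, 14]),
  ((4, 15), [4, 1, 3, 5, 2, 7, 9, 6, 8, 10, 12, 14, 11, 16, 13, 15]),
  ((4, 16), [4, 1, 3, 5, 2, 7, 9, 6, 8, 10, 12, 15, 13, 11, 14, 16]),
  ((5, 6), [5, 2, 4, 1, 3, 8, 10, 7, 9, 11, 16, 14, 12, 15, 13, 6]),
  ((5, 7), [5, 2, 4, 1, 3, 6, 8, 10, 12, 15, 13, 11, 9, 16, 14, 7]),
  ((5, 8), [5, 2, 4, 1, 3, 6, 9, 7, 10, 12, 14, 11, 16, 13, 15, 8]),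
  ((5, 9), [5, 2, 4, 1, 3, 6, 8, 10, 7, 12, 15, 13, 11, 14, 16, 9]),
  ((5, 10), [5, 2, 4, 1, 3, 6, 8, 11, 9, 7, 12, 14, 16, 13, 15, 10]),
  ((5, 11), [5, 2, 4, 1, 3, 6, 8, 10, 7, 9, 12, 15, 13, 16, 14, 11]),
  ((5, 12), [5, 2, 4, 1, 3, 6, 8, 10, 7, 9, 11, 14, 16, 13, 15, 12]),
  ((5, 13), [5, 2, 4, 1, 3, 6, 8, 10, 7, 9, 11, 16, 14, 12, 15, 13]),
  ((5, 14), [5, 2, 4, 1, 3, 6, 8, 10, 7, 9, 11, 16, 13, 15, 12, 14]),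
  ((5, 15), [5, 2, 4, 1, 3, 6, 8, 10, 7, 9, 11, 13, 16, 14, 12, 15]),
  ((5, 16), [5, 2, 4, 1, 3, 6, 8, 10, 7, 9, 11, 13, 15, 12, 14, 16]),
  ((6, 7), [6, 1, 3, 5, 2, 4, 9, 11, 8, 10, 12, 15, 13, 16, 14, 7]),
  ((6, 8), [6, 1, 3, 5, 2, 4, 7, 9, 11, 13, 16, 14, 12, 10, 15, 8]),
  ((6, 9), [6, 1, 3, 5, 2, 4, 7, 10, 8, 11, 13, 15, 12, 14, 16, 9]),
  ((6, 10), [6, 1, 3, 5, 2, 4, 7, 9, 11, 8, 13, 16, 14, 12, 15, 10]),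
  ((6, 11), [6, 1, 3, 5, 2, 4, 7, 9, 12, 10, 8, 15, 13, 16, 14, 11]),
  ((6, 12), [6, 1, 3, 5, 2, 4, 7, 9, 11, 8, 10, 15, 13, 16, 14, 12]),
  ((6, 13), [6, 1, 3, 5, 2, 4, 7, 9, 11, 8, 10, 15, 12, 14, 16, 13]),
  ((6, 14), [6, 1, 3, 5, 2, 4, 7, 9, 11, 8, 10, 12, 15, 13, 16, 14]),
  ((6, 15), [6, 1, 3, 5, 2, 4, 7, 9, 11, 8, 10, 12, 14, 16, 13, 15]),
  ((6, 16), [6, 1, 3, 5, 2, 4, 7, 9, 11, 8, 10, 13, 15, 12, 14, 16]),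
  ((7, 8), [7, 2, 4, 1, 3, 5, 10, 12, 9, 6, 11, 14, 16, 13, 15, 8]),
  ((7, 9), [7, 2, 4, 1, 3, 5, 8, 6, 11, 13, 10, 15, 12, 14, 16, 9]),
  ((7, 10), [7, 2, 4, 1, 3, 5, 8, 6, 9, 11, 13, 16, 14, 12, 15, 10]),
  ((7, 11), [7, 2, 4, 1, 3, 5, 8, 6, 9, 12, 10, 15, 13, 16, 14, 11]),
  ((7, 12), [7, 2, 4, 1, 3, 5, 8, 6, 9, 11, 14, 16, 13, 10, 15, 12]),
  ((7, 13), [7, 2, 4, 1, 3, 5, 8, 6, 9, 11, 16, 14, 12, 10, 15, 13]),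
  ((7, 14), [7, 2, 4, 1, 3, 5, 8, 6, 9, 11, 16, 13, 10, 15, 12, 14]),
  ((7, 15), [7, 2, 4, 1, 3, 5, 8, 6, 9, 11, 13, 16, 14, 12, 10, 15]),
  ((7, 16), [7, 2, 4, 1, 3, 5, 8, 6, 9, 11, 13, 10, 15, 12, 14, 16]),
  ((8, 9), [8, 1, 3, 5, 2, 4, 6, 11, 13, 10, 15, 12, 7, 14, 16, 9]),
  ((8, 10), [8, 1, 3, 5, 2, 4, 6, 9, 7, 12, 14, 11, 16, 13, 15, 10]),
  ((8, 11), [8, 1, 3, 5, 2, 4, 6, 9, 7, 10, 12, 15, 13, 16, 14, 11]),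
  ((8, 12), [8, 1, 3, 5, 2, 4, 6, 9, 7, 10, 15, 13, 11, 16, 14, 12]),
  ((8, 13), [8, 1, 3, 5, 2, 4, 6, 9, 7, 10, 15, 12, 14, 11, 16, 13]),
  ((8, 14), [8, 1, 3, 5, 2, 4, 6, 9, 7, 10, 12, 15, 13, 11, 16, 14]),
  ((8, 15), [8, 1, 3, 5, 2, 4, 6, 9, 7, 10, 12, 14, 11, 16, 13, 15]),
  ((8, 16), [8, 1, 3, 5, 2, 4, 6, 9, 7, 10, 12, 15, 13, 11, 14, 16]),
  ((9, 10), [9, 2, 4, 1, 3, 5, 7, 12, 14, 11, 16, 13, 6, 8, 15, 10]),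
  ((9, 11), [9, 2, 4, 1, 3, 5, 7, 10, 8, 6, 13, 15, 12, 14, 16, 11]),
  ((9, 12), [9, 2, 4, 1, 3, 5, 7, 10, 8, 6, 11, 14, 16, 13, 15, 12]),
  ((9, 13), [9, 2, 4, 1, 3, 5, 7, 10, 8, 6, 11, 16, 14, 12, 15, 13]),
  ((9, 14), [9, 2, 4, 1, 3, 5, 7, 10, 8, 6, 11, 16, 13, 15, 12, 14]),
  ((9, 15), [9, 2, 4, 1, 3, 5, 7, 10, 8, 6, 11, 13, 16, 14, 12, 15]),
  ((9, 16), [9, 2, 4, 1, 3, 5, 7, 10, 8, 6, 11, 13, 15, 12, 14, 16]),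
  ((10, 11), [10, 3, 1, 4, 2, 5, 7, 9, 6, 8, 13, 15, 12, 14, 16, 11]),
  ((10, 12), [10, 3, 1, 4, 2, 5, 7, 9, 6, 8, 11, 14, 16, 13, 15, 12]),
  ((10, 13), [10, 3, 1, 4, 2, 5, 7, 9, 6, 8, 11, 16, 14, 12, 15, 13]),
  ((10, 14), [10, 3, 1, 4, 2, 5, 7, 9, 6, 8, 11, 16, 13, 15, 12, 14]),
  ((10, 15), [10, 3, 1, 4, 2, 5, 7, 9, 6, 8, 11, 13, 16, 14, 12, 15]),
  ((10, 16), [10, 3, 1, 4, 2, 5, 7, 9, 6, 8, 11, 13, 15, 12, 14, 16]),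
  ((11, 12), [11, 4, 1, 3, 5, 2, 7, 9, 6, 8, 10, 15, 13, 16, 14, 12]),
  ((11, 13), [11, 4, 1, 3, 5, 2, 7, 9, 6, 8, 10, 15, 12, 14, 16, 13]),
  ((11, 14), [11, 4, 1, 3, 5, 2, 7, 9, 6, 8, 10, 12, 15, 13, 16, 14]),
  ((11, 15), [11, 4, 1, 3, 5, 2, 7, 9, 6, 8, 10, 12, 14, 16, 13, 15]),
  ((11, 16), [11, 4, 1, 3, 5, 2, 7, 9, 6, 8, 10, 13, 15, 12, 14, 16]),
  ((12, 13), [12, 1, 3, 5, 2, 4, 6, 8, 11, 9, 16, 14, 7, 10, 15, 13]),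
  ((12, 14), [12, 1, 3, 5, 2, 4, 6, 8, 10, 15, 13, 11, 16, 9, 7, 14]),
  ((12, 15), [12, 1, 3, 5, 2, 4, 6, 8, 10, 7, 9, 11, 14, 16, 13, 15]),
  ((12, 16), [12, 1, 3, 5, 2, 4, 6, 8, 10, 15, 13, 11, 9, 7, 14, 16]),
  ((13, 14), [13, 2, 4, 1, 3, 5, 7, 9, 12, 10, 15, 8, 6, 11, 16, 14]),
  ((13, 15), [13, 2, 4, 1, 3, 5, 7, 9, 6, 8, 11, 16, 14, 12, 10, 15]),
  ((13, 16), [13, 2, 4, 1, 3, 5, 7, 9, 6, 8, 10, 15, 12, 14, 11, 16]),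
  ((14, 15), [14, 1, 3, 5, 2, 4, 6, 8, 10, 7, 12, 9, 11, 16, 13, 15]),
  ((14, 16), [14, 1, 3, 5, 2, 4, 6, 8, 10, 7, 9, 12, 15, 13, 11, 16]),
  ((15, 16), [15, 2, 4, 1, 3, 5, 7, 9, 6, 8, 10, 12, 14, 11, 13, 16])]

def W17 : List ((Nat × Nat) × List Nat) := [
  ((1, 2), [1, 3, 5, 7, 4, 6, 8, 10, 12, 9, 11, 13, 16, 14, 17, 15, 2]),
  ((1, 3), [1, 4, 2, 5, 7, 9, 6, 8, 10, 12, 14, 17, 15, 13, 11, 16, 3]),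
  ((1, 4), [1, 3, 5, 2, 7, 9, 6, 8, 10, 12, 14, 11, 16, 13, 15, 17, 4]),
  ((1, 5), [1, 3, 6, 4, 2, 7, 9, 11, 8, 10, 12, 14, 17, 15, 13, 16, 5]),
  ((1, 6), [1, 3, 5, 2, 4, 7, 9, 11, 8, 10, 12, 14, 16, 13, 15, 17, 6]),
  ((1, 7), [1, 3, 5, 2, 4, 6, 8, 10, 12, 9, 11, 16, 13, 15, 17, 14, 7]),
  ((1, 8), [1, 3, 5, 2, 4, 6, 9, 7, 10, 12, 14, 17, 15, 13, 16, 11, 8]),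
  ((1, 9), [1, 3, 5, 2, 4, 6, 8, 10, 7, 12, 14, 17, 15, 13, 11, 16, 9]),
  ((1, 10), [1, 3, 5, 2, 4, 6, 8, 11, 9, 7, 12, 14, 16, 13, 15, 17, 10]),
  ((1, 11), [1, 3, 5, 2, 4, 6, 8, 10, 7, 9, 12, 14, 17, 15, 13, 16, 11]),
  ((1, 12), [1, 3, 5, 2, 4, 6, 8, 10, 7, 9, 11, 13, 16, 14, 17, 15, 12]),
  ((1, 13), [1, 3, 5, 2, 4, 6, 8, 10, 7, 9, 11, 16, 14, 12, 17, 15, 13]),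
  ((1, 14), [1, 3, 5, 2, 4, 6, 8, 10, 7, 9, 11, 16, 13, 15, 12, 17, 14]),
  ((1, 15), [1, 3, 5, 2, 4, 6, 8, 10, 7, 9, 11, 13, 16, 14, 12, 17, 15]),
  ((1, 16), [1, 3, 5, 2, 4, 6, 8, 10, 7, 9, 11, 13, 15, 12, 17, 14, 16]),
  ((1, 17), [1, 3, 5, 2, 4, 6, 8, 10, 7, 9, 11, 13, 16, 14, 12, 15, 17]),
  ((2, 3), [2, 4, 1, 6, 8, 5, 7, 9, 11, 13, 10, 12, 15, 17, 14, 16, 3]),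
  ((2, 4), [2, 5, 3, 1, 6, 8, 10, 7, 9, 11, 13, 16, 14, 12, 15, 17, 4]),
  ((2, 5), [2, 4, 1, 3, 6, 8, 10, 7, 9, 11, 13, 15, 12, 17, 14, 16, 5]),
  ((2, 6), [2, 4, 1, 3, 5, 7, 9, 11, 8, 10, 12, 14, 16, 13, 15, 17, 6]),
  ((2, 7), [2, 4, 1, 3, 5, 8, 6, 9, 11, 13, 16, 14, 12, 15, 17, 10, 7]),
  ((2, 8), [2, 4, 1, 3, 5, 7, 9, 6, 11, 13, 16, 14, 12, 10, 17, 15, 8]),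
  ((2, 9), [2, 4, 1, 3, 5, 7, 10, 8, 6, 11, 13, 15, 12, 17, 14, 16, 9]),
  ((2, 10), [2, 4, 1, 3, 5, 7, 9, 6, 8, 11, 13, 16, 14, 12, 15, 17, 10]),
  ((2, 11), [2, 4, 1, 3, 5, 7, 9, 6, 8, 10, 12, 14, 17, 15, 13, 16, 11]),
  ((2, 12), [2, 4, 1, 3, 5, 7, 9, 6, 8, 10, 13, 11, 16, 14, 17, 15, 12]),
  ((2, 13), [2, 4, 1, 3, 5, 7, 9, 6, 8, 10, 12, 15, 17, 14, 11, 16, 13]),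
  ((2, 14), [2, 4, 1, 3, 5, 7, 9, 6, 8, 10, 12, 17, 15, 13, 11, 16, 14]),
  ((2, 15), [2, 4, 1, 3, 5, 7, 9, 6, 8, 10, 12, 17, 14, 11, 16, 13, 15]),
  ((2, 16), [2, 4, 1, 3, 5, 7, 9, 6, 8, 10, 12, 14, 17, 15, 13, 11, 16]),
  ((2, 17), [2, 4, 1, 3, 5, 7, 9, 6, 8, 10, 12, 14, 11, 16, 13, 15, 17]),
  ((3, 4), [3, 1, 6, 8, 5, 2, 7, 9, 11, 13, 16, 14, 12, 10, 15, 17, 4]),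
  ((3, 5), [3, 1, 4, 2, 7, 9, 6, 8, 10, 12, 14, 17, 15, 13, 11, 16, 5]),
  ((3, 6), [3, 1, 4, 2, 5, 7, 9, 11, 8, 10, 12, 14, 16, 13, 15, 17, 6]),
  ((3, 7), [3, 1, 4, 2, 5, 8, 6, 9, 11, 13, 16, 14, 12, 15, 17, 10, 7]),
  ((3, 8), [3, 1, 4, 2, 5, 7, 9, 6, 11, 13, 16, 14, 12, 10, 17, 15, 8]),
  ((3, 9), [3, 1, 4, 2, 5, 7, 10, 8, 6, 11, 13, 15, 12, 17, 14, 16, 9]),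
  ((3, 10), [3, 1, 4, 2, 5, 7, 9, 6, 8, 11, 13, 16, 14, 12, 15, 17, 10]),
  ((3, 11), [3, 1, 4, 2, 5, 7, 9, 6, 8, 10, 12, 14, 17, 15, 13, 16, 11]),
  ((3, 12), [3, 1, 4, 2, 5, 7, 9, 6, 8, 10, 13, 11, 16, 14, 17, 15, 12]),
  ((3, 13), [3, 1, 4, 2, 5, 7, 9, 6, 8, 10, 12, 15, 17, 14, 11, 16, 13]),
  ((3, 14), [3, 1, 4, 2, 5, 7, 9, 6, 8, 10, 12, 17, 15, 13, 11, 16, 14]),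
  ((3, 15), [3, 1, 4, 2, 5, 7, 9, 6, 8, 10, 12, 17, 14, 11, 16, 13, 15]),
  ((3, 16), [3, 1, 4, 2, 5, 7, 9, 6, 8, 10, 12, 14, 17, 15, 13, 11, 16]),
  ((3, 17), [3, 1, 4, 2, 5, 7, 9, 6, 8, 10, 12, 14, 11, 16, 13, 15, 17]),
  ((4, 5), [4, 1, 3, 6, 8, 10, 7, 2, 9, 11, 13, 15, 12, 17, 14, 16, 5]),
  ((4, 6), [4, 1, 3, 5, 2, 7, 9, 11, 8, 10, 12, 14, 16, 13, 15, 17, 6]),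
  ((4, 7), [4, 1, 3, 5, 2, 9, 6, 8, 10, 12, 17, 15, 13, 11, 16, 14, 7]),
  ((4, 8), [4, 1, 3, 5, 2, 7, 9, 6, 11, 13, 16, 14, 12, 10, 17, 15, 8]),
  ((4, 9), [4, 1, 3, 5, 2, 7, 10, 8, 6, 11, 13, 15, 12, 17, 14, 16, 9]),
  ((4, 10), [4, 1, 3, 5, 2, 7, 9, 6, 8, 11, 13, 16, 14, 12, 15, 17, 10]),
  ((4, 11), [4, 1, 3, 5, 2, 7, 9, 6, 8, 10, 12, 14, 17, 15, 13, 16, 11]),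
  ((4, 12), [4, 1, 3, 5, 2, 7, 9, 6, 8, 10, 13, 11, 16, 14, 17, 15, 12]),
  ((4, 13), [4, 1, 3, 5, 2, 7, 9, 6, 8, 10, 12, 15, 17, 14, 11, 16, 13]),
  ((4, 14), [4, 1, 3, 5, 2, 7, 9, 6, 8, 10, 12, 17, 15, 13, 11, 16, 14]),
  ((4, 15), [4, 1, 3, 5, 2, 7, 9, 6, 8, 10, 12, 17, 14, 11, 16, 13, 15]),
  ((4, 16), [4, 1, 3, 5, 2, 7, 9, 6, 8, 10, 12, 14, 17, 15, 13, 11, 16]),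
  ((4, 17), [4, 1, 3, 5, 2, 7, 9, 6, 8, 10, 12, 14, 11, 16, 13, 15, 17]),
  ((5, 6), [5, 2, 4, 1, 3, 8, 10, 7, 9, 11, 13, 16, 14, 12, 15, 17, 6]),
  ((5, 7), [5, 2, 4, 1, 3, 6, 8, 10, 12, 9, 11, 16, 13, 15, 17, 14, 7]),
  ((5, 8), [5, 2, 4, 1, 3, 6, 9, 7, 10, 12, 14, 17, 15, 13, 16, 11, 8]),
  ((5, 9), [5, 2, 4, 1, 3, 6, 8, 10, 7, 12, 14, 17, 15, 13, 11, 16, 9]),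
  ((5, 10), [5, 2, 4, 1, 3, 6, 8, 11, 9, 7, 12, 14, 16, 13, 15, 17, 10]),
  ((5, 11), [5, 2, 4, 1, 3, 6, 8, 10, 7, 9, 12, 14, 17, 15, 13, 16, 11]),
  ((5, 12), [5, 2, 4, 1, 3, 6, 8, 10, 7, 9, 11, 13, 16, 14, 17, 15, 12]),
  ((5, 13), [5, 2, 4, 1, 3, 6, 8, 10, 7, 9, 11, 16, 14, 12, 17, 15, 13]),
  ((5, 14), [5, 2, 4, 1, 3, 6, 8, 10, 7, 9, 11, 16, 13, 15, 12, 17, 14]),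
  ((5, 15), [5, 2, 4, 1, 3, 6, 8, 10, 7, 9, 11, 13, 16, 14, 12, 17, 15]),
  ((5, 16), [5, 2, 4, 1, 3, 6, 8, 10, 7, 9, 11, 13, 15, 12, 17, 14, 16]),
  ((5, 17), [5, 2, 4, 1, 3, 6, 8, 10, 7, 9, 11, 13, 16, 14, 12, 15, 17]),
  ((6, 7), [6, 1, 3, 5, 2, 4, 9, 11, 8, 10, 12, 17, 15, 13, 16, 14, 7]),
  ((6, 8), [6, 1, 3, 5, 2, 4, 7, 9, 11, 13, 16, 14, 12, 10, 17, 15, 8]),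
  ((6, 9), [6, 1, 3, 5, 2, 4, 7, 10, 8, 11, 13, 15, 12, 17, 14, 16, 9]),
  ((6, 10), [6, 1, 3, 5, 2, 4, 7, 9, 11, 8, 13, 16, 14, 12, 15, 17, 10]),
  ((6, 11), [6, 1, 3, 5, 2, 4, 7, 9, 12, 10, 8, 13, 15, 17, 14, 16, 11]),
  ((6, 12), [6, 1, 3, 5, 2, 4, 7, 9, 11, 8, 10, 13, 16, 14, 17, 15, 12]),
  ((6, 13), [6, 1, 3, 5, 2, 4, 7, 9, 11, 8, 10, 12, 15, 17, 14, 16, 13]),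
  ((6, 14), [6, 1, 3, 5, 2, 4, 7, 9, 11, 8, 10, 12, 17, 15, 13, 16, 14]),
  ((6, 15), [6, 1, 3, 5, 2, 4, 7, 9, 11, 8, 10, 12, 17, 14, 16, 13, 15]),
  ((6, 16), [6, 1, 3, 5, 2, 4, 7, 9, 11, 8, 10, 12, 14, 17, 15, 13, 16]),
  ((6, 17), [6, 1, 3, 5, 2, 4, 7, 9, 11, 8, 10, 12, 14, 16, 13, 15, 17]),
  ((7, 8), [7, 2, 4, 1, 3, 5, 10, 12, 9, 6, 11, 13, 16, 14, 17, 15, 8]),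
  ((7, 9), [7, 2, 4, 1, 3, 5, 8, 6, 11, 13, 10, 12, 15, 17, 14, 16, 9]),
  ((7, 10), [7, 2, 4, 1, 3, 5, 8, 6, 9, 11, 13, 16, 14, 12, 15, 17, 10]),
  ((7, 11), [7, 2, 4, 1, 3, 5, 8, 6, 9, 12, 10, 13, 15, 17, 14, 16, 11]),
  ((7, 12), [7, 2, 4, 1, 3, 5, 8, 6, 9, 11, 13, 16, 14, 17, 10, 15, 12]),
  ((7, 13), [7, 2, 4, 1, 3, 5, 8, 6, 9, 11, 16, 14, 12, 10, 17, 15, 13]),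
  ((7, 14), [7, 2, 4, 1, 3, 5, 8, 6, 9, 11, 16, 13, 10, 12, 15, 17, 14]),
  ((7, 15), [7, 2, 4, 1, 3, 5, 8, 6, 9, 11, 13, 16, 14, 12, 10, 17, 15]),
  ((7, 16), [7, 2, 4, 1, 3, 5, 8, 6, 9, 11, 13, 10, 12, 15, 17, 14, 16]),
  ((7, 17), [7, 2, 4, 1, 3, 5, 8, 6, 9, 11, 13, 16, 14, 12, 10, 15, 17]),
  ((8, 9), [8, 1, 3, 5, 2, 4, 6, 11, 13, 10, 7, 12, 15, 17, 14, 16, 9]),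
  ((8, 10), [8, 1, 3, 5, 2, 4, 6, 9, 7, 12, 14, 11, 16, 13, 15, 17, 10]),
  ((8, 11), [8, 1, 3, 5, 2, 4, 6, 9, 7, 10, 12, 14, 17, 15, 13, 16, 11]),
  ((8, 12), [8, 1, 3, 5, 2, 4, 6, 9, 7, 10, 13, 11, 16, 14, 17, 15, 12]),
  ((8, 13), [8, 1, 3, 5, 2, 4, 6, 9, 7, 10, 12, 15, 17, 14, 11, 16, 13]),
  ((8, 14), [8, 1, 3, 5, 2, 4, 6, 9, 7, 10, 12, 17, 15, 13, 11, 16, 14]),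
  ((8, 15), [8, 1, 3, 5, 2, 4, 6, 9, 7, 10, 12, 17, 14, 11, 16, 13, 15]),
  ((8, 16), [8, 1, 3, 5, 2, 4, 6, 9, 7, 10, 12, 14, 17, 15, 13, 11, 16]),
  ((8, 17), [8, 1, 3, 5, 2, 4, 6, 9, 7, 10, 12, 14, 11, 16, 13, 15, 17]),
  ((9, 10), [9, 2, 4, 1, 3, 5, 7, 12, 14, 11, 16, 13, 6, 8, 15, 17, 10]),
  ((9, 11), [9, 2, 4, 1, 3, 5, 7, 10, 8, 6, 13, 15, 12, 17, 14, 16, 11]),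
  ((9, 12), [9, 2, 4, 1, 3, 5, 7, 10, 8, 6, 11, 13, 16, 14, 17, 15, 12]),
  ((9, 13), [9, 2, 4, 1, 3, 5, 7, 10, 8, 6, 11, 16, 14, 12, 17, 15, 13]),
  ((9, 14), [9, 2, 4, 1, 3, 5, 7, 10, 8, 6, 11, 16, 13, 15, 12, 17, 14]),
  ((9, 15), [9, 2, 4, 1, 3, 5, 7, 10, 8, 6, 11, 13, 16, 14, 12, 17, 15]),
  ((9, 16), [9, 2, 4, 1, 3, 5, 7, 10, 8, 6, 11, 13, 15, 12, 17, 14, 16]),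
  ((9, 17), [9, 2, 4, 1, 3, 5, 7, 10, 8, 6, 11, 13, 16, 14, 12, 15, 17]),
  ((10, 11), [10, 3, 1, 4, 2, 5, 7, 9, 6, 8, 13, 15, 12, 17, 14, 16, 11]),
  ((10, 12), [10, 3, 1, 4, 2, 5, 7, 9, 6, 8, 11, 13, 16, 14, 17, 15, 12]),
  ((10, 13), [10, 3, 1, 4, 2, 5, 7, 9, 6, 8, 11, 16, 14, 12, 17, 15, 13]),
  ((10, 14), [10, 3, 1, 4, 2, 5, 7, 9, 6, 8, 11, 16, 13, 15, 12, 17, 14]),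
  ((10, 15), [10, 3, 1, 4, 2, 5, 7, 9, 6, 8, 11, 13, 16, 14, 12, 17, 15]),
  ((10, 16), [10, 3, 1, 4, 2, 5, 7, 9, 6, 8, 11, 13, 15, 12, 17, 14, 16]),
  ((10, 17), [10, 3, 1, 4, 2, 5, 7, 9, 6, 8, 11, 13, 16, 14, 12, 15, 17]),
  ((11, 12), [11, 4, 1, 3, 5, 2, 7, 9, 6, 8, 10, 13, 16, 14, 17, 15, 12]),
  ((11, 13), [11, 4, 1, 3, 5, 2, 7, 9, 6, 8, 10, 12, 15, 17, 14, 16, 13]),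
  ((11, 14), [11, 4, 1, 3, 5, 2, 7, 9, 6, 8, 10, 12, 17, 15, 13, 16, 14]),
  ((11, 15), [11, 4, 1, 3, 5, 2, 7, 9, 6, 8, 10, 12, 17, 14, 16, 13, 15]),
  ((11, 16), [11, 4, 1, 3, 5, 2, 7, 9, 6, 8, 10, 12, 14, 17, 15, 13, 16]),
  ((11, 17), [11, 4, 1, 3, 5, 2, 7, 9, 6, 8, 10, 12, 14, 16, 13, 15, 17]),
  ((12, 13), [12, 1, 3, 5, 2, 4, 6, 8, 10, 7, 9, 11, 16, 14, 17, 15, 13]),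
  ((12, 14), [12, 1, 3, 5, 2, 4, 6, 8, 10, 7, 9, 11, 16, 13, 15, 17, 14]),
  ((12, 15), [12, 1, 3, 5, 2, 4, 6, 8, 10, 7, 9, 11, 13, 16, 14, 17, 15]),
  ((12, 16), [12, 1, 3, 5, 2, 4, 6, 8, 10, 7, 9, 11, 13, 15, 17, 14, 16]),
  ((12, 17), [12, 1, 3, 5, 2, 4, 6, 8, 10, 7, 9, 11, 14, 16, 13, 15, 17]),
  ((13, 14), [13, 2, 4, 1, 3, 5, 7, 9, 6, 17, 10, 12, 15, 8, 11, 16, 14]),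
  ((13, 15), [13, 2, 4, 1, 3, 5, 7, 9, 6, 8, 11, 16, 14, 12, 10, 17, 15]),
  ((13, 16), [13, 2, 4, 1, 3, 5, 7, 9, 6, 8, 10, 12, 15, 17, 14, 11, 16]),
  ((13, 17), [13, 2, 4, 1, 3, 5, 7, 9, 6, 8, 11, 16, 14, 12, 10, 15, 17]),
  ((14, 15), [14, 1, 3, 5, 2, 4, 6, 8, 10, 13, 11, 16, 9, 7, 12, 17, 15]),
  ((14, 16), [14, 1, 3, 5, 2, 4, 6, 8, 10, 7, 9, 12, 17, 15, 13, 11, 16]),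
  ((14, 17), [14, 1, 3, 5, 2, 4, 6, 8, 10, 7, 9, 11, 16, 13, 15, 12, 17]),
  ((15, 16), [15, 2, 4, 1, 3, 5, 7, 9, 6, 8, 10, 12, 17, 14, 11, 13, 16]),
  ((15, 17), [15, 2, 4, 1, 3, 5, 7, 9, 6, 8, 10, 13, 11, 16, 14, 12, 17]),
  ((16, 17), [16, 3, 1, 4, 2, 5, 7, 9, 6, 8, 10, 12, 14, 11, 13, 15, 17])]

def WSmall : List ((Nat × Nat) × List Nat) := [
  ((6, 2), [1, 4, 6, 3, 5, 2]),
  ((6, 3), [1, 6, 4, 2, 5, 3]),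
  ((6, 4), [1, 6, 3, 5, 2, 4]),
  ((6, 5), [1, 3, 6, 4, 2, 5]),
  ((6, 6), [1, 3, 5, 2, 4, 6]),
  ((7, 2), [1, 3, 6, 4, 7, 5, 2]),
  ((7, 3), [1, 6, 4, 2, 7, 5, 3]),
  ((7, 4), [1, 6, 3, 5, 2, 7, 4]),
  ((7, 5), [1, 3, 6, 4, 2, 7, 5]),
  ((7, 6), [1, 3, 5, 2, 7, 4, 6]),
  ((7, 7), [1, 3, 6, 4, 2, 5, 7]),
  ((8, 2), [1, 3, 5, 8, 6, 4, 7, 2]),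
  ((8, 3), [1, 4, 2, 7, 5, 8, 6, 3]),
  ((8, 4), [1, 3, 6, 8, 5, 2, 7, 4]),
  ((8, 5), [1, 3, 8, 6, 4, 2, 7, 5]),
  ((8, 6), [1, 3, 8, 5, 2, 7, 4, 6]),
  ((8, 7), [1, 3, 5, 8, 6, 4, 2, 7]),
  ((8, 8), [1, 3, 5, 2, 7, 4, 6, 8])]

def F6 : List ((Nat × Nat) × List Nat) := [
  ((1, 6), [1, 3, 5, 2, 4, 6]),
  ((2, 6), [2, 5, 3, 1, 4, 6]),
  ((3, 6), [3, 5, 2, 4, 1, 6]),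
  ((4, 6), [4, 2, 5, 3, 1, 6]),
  ((5, 6), [5, 2, 4, 1, 3, 6]),
  ((6, 5), [6, 3, 1, 4, 2, 5])]

def F7 : List Nat := [7, 2, 5, 3, 1, 4, 6]

def F8 : List Nat := [8, 1, 3, 6, 4, 2, 5, 7]

def PS : List ((Nat × Nat) × (List Nat × List Nat)) := [
  ((1, 2), ([1, 3, 5, 8, 6, 4, 7], [9, 2])),
  ((1, 3), ([1, 4, 2, 5, 7], [9, 6, 8, 3])),
  ((1, 4), ([1, 3, 6, 8, 5, 2, 7], [9, 4])),
  ((1, 5), ([1, 3, 8, 6, 4, 7], [9, 2, 5])),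
  ((1, 6), ([1, 3, 8, 5, 2, 4, 7], [9, 6])),
  ((2, 3), ([2, 4, 1, 8, 5, 7], [9, 6, 3])),
  ((2, 4), ([2, 5, 7], [9, 6, 3, 8, 1, 4])),
  ((2, 5), ([2, 4, 7], [9, 6, 1, 3, 8, 5])),
  ((2, 6), ([2, 4, 1, 3, 8, 5, 7], [9, 6])),
  ((3, 4), ([3, 1, 6, 8, 5, 2, 7], [9, 4])),
  ((3, 5), ([3, 1, 4, 2, 7], [9, 6, 8, 5])),
  ((3, 6), ([3, 1, 4, 7], [9, 2, 5, 8, 6])),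
  ((4, 5), ([4, 2, 7], [9, 6, 1, 3, 8, 5])),
  ((4, 6), ([4, 1, 3, 8, 5, 2, 7], [9, 6])),
  ((5, 6), ([5, 2, 7], [9, 4, 1, 3, 8, 6]))]

def PB : List ((Nat × Nat) × (List Nat × List Nat × Nat × Nat × Nat × Nat)) := [
  ((1, 2), ([1], [3, 5, 8, 6, 4, 7, 9, 2], 1, 3, 1, 0)),
  ((1, 3), ([1, 6, 9, 2], [4, 7, 5, 8, 3], 2, 4, 0, 1)),
  ((1, 4), ([1], [3, 5, 8, 6, 9, 2, 7, 4], 1, 3, 1, 0)),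
  ((1, 5), ([1], [3, 8, 6, 4, 2, 9, 7, 5], 1, 3, 1, 0)),
  ((1, 6), ([1], [3, 8, 5, 2, 4, 7, 9, 6], 1, 3, 1, 0)),
  ((1, 7), ([1], [3, 5, 8, 6, 4, 2, 9, 7], 1, 3, 1, 0)),
  ((1, 8), ([1], [3, 5, 2, 4, 7, 9, 6, 8], 1, 3, 1, 0)),
  ((1, 9), ([1], [3, 5, 8, 6, 4, 2, 7, 9], 1, 3, 1, 0)),
  ((2, 3), ([2, 4, 6, 9, 7, 5, 8, 1], [3], 1, 3, 1, 0)),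
  ((2, 4), ([2, 5, 8, 1], [3, 6, 9, 7, 4], 1, 3, 1, 0)),
  ((2, 5), ([2, 4, 1], [3, 8, 6, 9, 7, 5], 1, 3, 1, 0)),
  ((2, 6), ([2, 4, 1], [3, 8, 5, 7, 9, 6], 1, 3, 1, 0)),
  ((2, 7), ([2, 4, 1], [3, 5, 8, 6, 9, 7], 1, 3, 1, 0)),
  ((2, 8), ([2, 4, 1], [3, 5, 7, 9, 6, 8], 1, 3, 1, 0)),
  ((2, 9), ([2, 4, 1], [3, 6, 8, 5, 7, 9], 1, 3, 1, 0)),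
  ((3, 4), ([3, 1, 6, 8, 5, 7, 9, 2], [4], 2, 4, 0, 1)),
  ((3, 5), ([3, 1, 8, 6, 9, 2], [4, 7, 5], 2, 4, 0, 1)),
  ((3, 6), ([3, 1, 8, 5, 2], [4, 7, 9, 6], 2, 4, 0, 1)),
  ((3, 7), ([3, 1, 6, 8, 5, 2], [4, 9, 7], 2, 4, 0, 1)),
  ((3, 8), ([3, 1, 6, 9, 2], [4, 7, 5, 8], 2, 4, 0, 1)),
  ((3, 9), ([3, 1, 6, 8, 5, 2], [4, 7, 9], 2, 4, 0, 1)),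
  ((4, 5), ([4, 1], [3, 8, 6, 9, 2, 7, 5], 1, 3, 1, 0)),
  ((4, 6), ([4, 1], [3, 8, 5, 2, 7, 9, 6], 1, 3, 1, 0)),
  ((4, 7), ([4, 1], [3, 5, 8, 6, 9, 2, 7], 1, 3, 1, 0)),
  ((4, 8), ([4, 1], [3, 5, 2, 7, 9, 6, 8], 1, 3, 1, 0)),
  ((4, 9), ([4, 1], [3, 6, 8, 5, 2, 7, 9], 1, 3, 1, 0)),
  ((5, 6), ([5, 2, 7, 9, 4, 1], [3, 8, 6], 1, 3, 1, 0)),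
  ((5, 7), ([5, 2, 4, 1], [3, 8, 6, 9, 7], 1, 3, 1, 0)),
  ((5, 8), ([5, 2, 4, 7, 9, 6, 1], [3, 8], 1, 3, 1, 0)),
  ((5, 9), ([5, 2, 7, 4, 1], [3, 8, 6, 9], 1, 3, 1, 0)),
  ((6, 7), ([6, 1], [3, 8, 5, 2, 4, 9, 7], 1, 3, 1, 0)),
  ((6, 8), ([6, 9, 2, 5, 7, 4, 1], [3, 8], 1, 3, 1, 0)),
  ((6, 9), ([6, 1], [3, 8, 5, 2, 4, 7, 9], 1, 3, 1, 0)),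
  ((7, 8), ([7, 2, 4, 9, 6, 1], [3, 5, 8], 1, 3, 1, 0)),
  ((7, 9), ([7, 2, 4, 1], [3, 5, 8, 6, 9], 1, 3, 1, 0)),
  ((8, 9), ([8, 1], [3, 5, 2, 7, 4, 6, 9], 1, 3, 1, 0))]


set_option maxRecDepth 40000 in
theorem base9 : ∀ u ∈ Finset.Icc 1 9, ∀ v ∈ Finset.Icc 1 9, u < v →
    HamP 9 u v (getW W9 u v) := by decide

set_option maxRecDepth 40000 in
theorem base10 : ∀ u ∈ Finset.Icc 1 10, ∀ v ∈ Finset.Icc 1 10, u < v →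
    HamP 10 u v (getW W10 u v) := by decide

set_option maxRecDepth 40000 in
theorem base11 : ∀ u ∈ Finset.Icc 1 11, ∀ v ∈ Finset.Icc 1 11, u < v →
    HamP 11 u v (getW W11 u v) := by decide

set_option maxRecDepth 40000 in
theorem base12 : ∀ u ∈ Finset.Icc 1 12, ∀ v ∈ Finset.Icc 1 12, u < v →
    HamP 12 u v (getW W12 u v) := by decide

set_option maxRecDepth 40000 in
theorem base13 : ∀ u ∈ Finset.Icc 1 13, ∀ v ∈ Finset.Icc 1 13, u < v →
    HamP 13 u v (getW W13 u v) := by decide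

set_option maxRecDepth 40000 in
theorem base14 : ∀ u ∈ Finset.Icc 1 14, ∀ v ∈ Finset.Icc 1 14, u < v →
    HamP 14 u v (getW W14 u v) := by decide

set_option maxRecDepth 40000 in
theorem base15 : ∀ u ∈ Finset.Icc 1 15, ∀ v ∈ Finset.Icc 1 15, u < v →
    HamP 15 u v (getW W15 u v) := by decide

set_option maxRecDepth 40000 in
theorem base16 : ∀ u ∈ Finset.Icc 1 16, ∀ v ∈ Finset.Icc 1 16, u < v →
    HamP 16 u v (getW W16 u v) := by decide

set_option maxRecDepth 40000 in
theorem base17 : ∀ u ∈ Finset.Icc 1 17, ∀ v ∈ Finset.Icc 1 17, u < v →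
    HamP 17 u v (getW W17 u v) := by decide

set_option maxRecDepth 40000 in
theorem small678 : ∀ n ∈ Finset.Icc 6 8, ∀ m ∈ Finset.Icc 2 n, HamP n 1 m (getW WSmall n m) := by
  decide

set_option maxRecDepth 40000 in
theorem fix6 : ∀ u ∈ Finset.Icc 1 6, HamP 6 u (if u ≤ 5 then 6 else 5) (getW F6 u (if u ≤ 5 then 6 else 5)) := by
  decide

set_option maxRecDepth 40000 in
theorem fix7 : HamP 7 7 6 F7 := by decide

set_option maxRecDepth 40000 in
theorem fix8 : HamP 8 8 7 F8 := by decide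

set_option maxRecDepth 40000 in
theorem patS : ∀ u ∈ Finset.Icc 1 6, ∀ v ∈ Finset.Icc 1 6, u < v →
    HamP 9 u v ((getP2 PS u v).1 ++ (getP2 PS u v).2) ∧
    (getP2 PS u v).1.getLast? = some 7 ∧ (getP2 PS u v).2.head? = some 9 := by decide

set_option maxRecDepth 40000 in
theorem patB : ∀ u ∈ Finset.Icc 1 9, ∀ v ∈ Finset.Icc 1 9, u < v →
    HamP 9 u v ((getP6 PB u v).1 ++ (getP6 PB u v).2.1) ∧
    (getP6 PB u v).1.getLast? = some (getP6 PB u v).2.2.1 ∧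
    (getP6 PB u v).2.1.head? = some (getP6 PB u v).2.2.2.1 ∧
    Nat.Prime ((getP6 PB u v).2.2.1 + (getP6 PB u v).2.2.2.2.1) ∧
    Nat.Prime ((getP6 PB u v).2.2.2.1 + (getP6 PB u v).2.2.2.2.2) ∧
    (getP6 PB u v).2.2.2.2.1 ≤ 4 ∧ (getP6 PB u v).2.2.2.2.2 ≤ 4 ∧
    (getP6 PB u v).2.2.2.2.1 ≠ (getP6 PB u v).2.2.2.2.2 := by decide

def Q (n : ℕ) : Prop :=
  ∀ u v, u ∈ Finset.Icc 1 n → v ∈ Finset.Icc 1 n → u ≠ v → ∃ l, HamP n u v l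

theorem Q_of_lt {n : ℕ} (h : ∀ u v, 1 ≤ u → v ≤ n → u < v → ∃ l, HamP n u v l) : Q n := by
  intro u v hu hv hne
  simp only [Finset.mem_Icc] at hu hv
  rcases Nat.lt_or_ge u v with hlt | hge
  · exact h u v hu.1 hv.2 hlt
  · obtain ⟨l, hl⟩ := h v u hv.1 hu.2 (by omega)
    exact ⟨l.reverse, HamOn.reverse hl⟩

theorem Qstep (n : ℕ) (hn : 18 ≤ n) (ih : ∀ k, 9 ≤ k → k < n → Q k) : Q n := by
  apply Q_of_lt
  intro u v h1u hvn huv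
  by_cases hv6 : v ≤ 6
  · -- both endpoints small: excursion pattern on {1..9} + block {10..n}
    obtain ⟨hp, hx7, hw9⟩ := patS u (by simp only [Finset.mem_Icc]; omega)
      v (by simp only [Finset.mem_Icc]; omega) huv
    obtain ⟨B, hB⟩ := ih (n - 9) (by omega) (by omega) 1 2
      (by simp only [Finset.mem_Icc]; omega) (by simp only [Finset.mem_Icc]; omega) (by omega)
    have hB' := HamOn.shift 9 hB
    rw [Icc_image_add] at hB'
    have e9 : n - 9 + 9 = n := by omega
    rw [e9] at hB'
    have hg := glue3 hp hx7 hw9 hB' (Icc_disj (by omega))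
      (Pp_nat (p := 3) (Or.inl (by norm_num)) (by norm_num))
      (Pp_nat (p := 2) (Or.inr (by norm_num)) (by norm_num))
    have e : Finset.Icc 1 9 ∪ Finset.Icc (1 + 9) n = Finset.Icc 1 n := by
      ext a; simp only [Finset.mem_union, Finset.mem_Icc]; omega
    exact ⟨_, e ▸ hg⟩
  · by_cases hu6 : u ≤ 6
    · -- u small, v ≥ 7: split at 6
      set x := if u ≤ 5 then 6 else 5 with hxdef
      have hA := fix6 u (by simp only [Finset.mem_Icc]; omega)
      set y := if v = x + 2 then x + 5 else x + 2 with hydef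
      have hx56 : x = 6 ∨ x = 5 := by rcases le_or_gt u 5 with h | h <;> simp [hxdef, h] <;> omega
      have hy : y = x + 2 ∨ y = x + 5 := by
        rcases eq_or_ne v (x + 2) with h | h <;> simp [hydef, h]
      have hyv : y ≠ v := by
        rcases eq_or_ne v (x + 2) with h | h <;> simp [hydef, h] <;> omega
      have hyr : 7 ≤ y ∧ y ≤ 11 := by rcases hx56 with h | h <;> rcases hy with h' | h' <;> omega
      obtain ⟨B, hB⟩ := ih (n - 6) (by omega) (by omega) (y - 6) (v - 6)
        (by simp only [Finset.mem_Icc]; omega) (by simp only [Finset.mem_Icc]; omega) (by omega)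
      have hB' := HamOn.shift 6 hB
      rw [Icc_image_add] at hB'
      have e1 : y - 6 + 6 = y := by omega
      have e2 : v - 6 + 6 = v := by omega
      have e3 : n - 6 + 6 = n := by omega
      rw [e1, e2, e3] at hB'
      have hxy : Pp x y := by
        refine Pp_nat (Or.inl ?_) (p := y - x) ?_
        · omega
        · have : y - x = 2 ∨ y - x = 5 := by rcases hy with h | h <;> omega
          rcases this with h | h <;> rw [h] <;> norm_num
      have hg := glue2 hA hB' (Icc_disj (by omega)) hxy
      have e : Finset.Icc 1 6 ∪ Finset.Icc (1 + 6) n = Finset.Icc 1 n := by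
        ext a; simp only [Finset.mem_union, Finset.mem_Icc]; omega
      exact ⟨_, e ▸ hg⟩
    · by_cases hu9 : u ≤ n - 9
      · -- 7 ≤ u ≤ n - 9: split at u
        have hA : ∃ A, HamP u u (u - 1) A := by
          rcases Nat.lt_or_ge u 9 with h9 | h9
          · have : u = 7 ∨ u = 8 := by omega
            rcases this with rfl | rfl
            · exact ⟨F7, fix7⟩
            · exact ⟨F8, fix8⟩
          · exact ih u h9 (by omega) u (u - 1) (by simp only [Finset.mem_Icc]; omega)
              (by simp only [Finset.mem_Icc]; omega) (by omega)
        obtain ⟨A, hA⟩ := hA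
        set y := if v = u + 2 then u + 4 else u + 2 with hydef
        have hy : y = u + 2 ∨ y = u + 4 := by
          rcases eq_or_ne v (u + 2) with h | h <;> simp [hydef, h]
        have hyv : y ≠ v := by
          rcases eq_or_ne v (u + 2) with h | h <;> simp [hydef, h] <;> omega
        obtain ⟨B, hB⟩ := ih (n - u) (by omega) (by omega) (y - u) (v - u)
          (by simp only [Finset.mem_Icc]; omega) (by simp only [Finset.mem_Icc]; omega) (by omega)
        have hB' := HamOn.shift u hB
        rw [Icc_image_add] at hB'
        have e1 : y - u + u = y := by omega
        have e2 : v - u + u = v := by omega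
        have e3 : n - u + u = n := by omega
        rw [e1, e2, e3] at hB'
        have hxy : Pp (u - 1) y := by
          refine Pp_nat (Or.inl ?_) (p := y - (u - 1)) ?_
          · omega
          · have : y - (u - 1) = 3 ∨ y - (u - 1) = 5 := by rcases hy with h | h <;> omega
            rcases this with h | h <;> rw [h] <;> norm_num
        have hg := glue2 hA hB' (Icc_disj (by omega)) hxy
        have e : Finset.Icc 1 u ∪ Finset.Icc (1 + u) n = Finset.Icc 1 n := by
          ext a; simp only [Finset.mem_union, Finset.mem_Icc]; omega
        exact ⟨_, e ▸ hg⟩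
      · -- both endpoints large: u ≥ n - 8
        set s := n - 9 with hsdef
        have hus : s + 1 ≤ u := by omega
        obtain ⟨hp, hxl, hwl, hpx, hpw, hd1, hd2, hdne⟩ :=
          patB (u - s) (by simp only [Finset.mem_Icc]; omega)
            (v - s) (by simp only [Finset.mem_Icc]; omega) (by omega)
        set L1 := (getP6 PB (u - s) (v - s)).1
        set L2 := (getP6 PB (u - s) (v - s)).2.1
        set x := (getP6 PB (u - s) (v - s)).2.2.1
        set w := (getP6 PB (u - s) (v - s)).2.2.2.1
        set d1 := (getP6 PB (u - s) (v - s)).2.2.2.2.1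
        set d2 := (getP6 PB (u - s) (v - s)).2.2.2.2.2
        have hp' := HamOn.shift s hp
        rw [Icc_image_add, List.map_append] at hp'
        have e1 : u - s + s = u := by omega
        have e2 : v - s + s = v := by omega
        have e3 : 9 + s = n := by omega
        rw [e1, e2, e3] at hp'
        obtain ⟨B, hB⟩ := ih s (by omega) (by omega) (s - d1) (s - d2)
          (by simp only [Finset.mem_Icc]; omega) (by simp only [Finset.mem_Icc]; omega) (by omega)
        have hxl' : (L1.map (· + s)).getLast? = some (x + s) := by
          rw [List.getLast?_map, hxl]; rfl
        have hwl' : (L2.map (· + s)).head? = some (w + s) := by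
          rw [List.head?_map, hwl]; rfl
        have hg := glue3 hp' hxl' hwl' hB (Icc_disj (show s < 1 + s by omega)).symm
          (Pp_nat (Or.inr (by omega)) hpx) (Pp_nat (Or.inl (by omega)) hpw)
        have e : Finset.Icc (1 + s) n ∪ Finset.Icc 1 s = Finset.Icc 1 n := by
          ext a; simp only [Finset.mem_union, Finset.mem_Icc]; omega
        exact ⟨_, e ▸ hg⟩

theorem Qbase (n : ℕ) (h9 : 9 ≤ n) (h17 : n ≤ 17) : Q n := by
  apply Q_of_lt
  intro u v h1 h2 hlt
  interval_cases n
  · exact ⟨_, base9 u (by simp only [Finset.mem_Icc]; omega) v (by simp only [Finset.mem_Icc]; omega) hlt⟩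
  · exact ⟨_, base10 u (by simp only [Finset.mem_Icc]; omega) v (by simp only [Finset.mem_Icc]; omega) hlt⟩
  · exact ⟨_, base11 u (by simp only [Finset.mem_Icc]; omega) v (by simp only [Finset.mem_Icc]; omega) hlt⟩
  · exact ⟨_, base12 u (by simp only [Finset.mem_Icc]; omega) v (by simp only [Finset.mem_Icc]; omega) hlt⟩
  · exact ⟨_, base13 u (by simp only [Finset.mem_Icc]; omega) v (by simp only [Finset.mem_Icc]; omega) hlt⟩
  · exact ⟨_, base14 u (by simp only [Finset.mem_Icc]; omega) v (by simp only [Finset.mem_Icc]; omega) hlt⟩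
  · exact ⟨_, base15 u (by simp only [Finset.mem_Icc]; omega) v (by simp only [Finset.mem_Icc]; omega) hlt⟩
  · exact ⟨_, base16 u (by simp only [Finset.mem_Icc]; omega) v (by simp only [Finset.mem_Icc]; omega) hlt⟩
  · exact ⟨_, base17 u (by simp only [Finset.mem_Icc]; omega) v (by simp only [Finset.mem_Icc]; omega) hlt⟩

theorem Qall : ∀ n, 9 ≤ n → Q n := by
  intro n
  induction n using Nat.strong_induction_on with
  | _ n ih =>
    intro h9
    rcases le_or_gt n 17 with h | h
    · exact Qbase n h9 h
    · exact Qstep n (by omega) (fun k hk9 hkn => ih k hkn hk9)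

theorem ham_to_fun (n m : ℕ) (hn : 1 ≤ n) (l : List ℕ) (h : HamP n 1 m l) :
    ∃ a : ℕ → ℤ, IsPrimeDiffHamPath n a ∧ a 0 = 1 ∧ a (n - 1) = m := by
  obtain ⟨hc, hnd, hcov, hh, hl⟩ := h
  have hlen : l.length = n := by
    rw [← List.toFinset_card_of_nodup hnd, hcov, Nat.card_Icc]; omega
  refine ⟨fun i => ((l.getD i 0 : ℕ) : ℤ), ⟨⟨?_, ?_, ?_⟩, ?_⟩, ?_, ?_⟩
  · -- MapsTo
    intro i hi
    beta_reduce
    simp only [Set.mem_Ico] at hi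
    have hil : i < l.length := by omega
    rw [List.getD_eq_getElem l 0 hil]
    have : l[i] ∈ Finset.Icc 1 n := by rw [← hcov]; exact List.mem_toFinset.2 (l.getElem_mem hil)
    simp only [Finset.mem_Icc] at this
    simp only [Set.mem_Icc]
    exact ⟨by exact_mod_cast this.1, by exact_mod_cast this.2⟩
  · -- InjOn
    intro i hi j hj hij
    simp only [Set.mem_Ico] at hi hj
    beta_reduce at hij
    have hil : i < l.length := by omega
    have hjl : j < l.length := by omega
    beta_reduce
    rw [List.getD_eq_getElem l 0 hil, List.getD_eq_getElem l 0 hjl] at hij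
    have : l[i] = l[j] := by exact_mod_cast hij
    exact (hnd.getElem_inj_iff).1 this
  · -- SurjOn
    intro x hx
    simp only [Set.mem_Icc] at hx
    set k := x.toNat with hk
    have hxk : (k : ℤ) = x := Int.toNat_of_nonneg (by linarith [hx.1])
    have hkn : k ∈ Finset.Icc 1 n := by simp only [Finset.mem_Icc]; omega
    rw [← hcov, List.mem_toFinset] at hkn
    obtain ⟨i, hil, hik⟩ := List.getElem_of_mem hkn
    refine ⟨i, ⟨by omega, by omega⟩, ?_⟩
    beta_reduce
    rw [List.getD_eq_getElem l 0 hil, hik, hxk]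
  · -- prime diffs
    intro i hi
    have h1 : i < l.length := by omega
    have h2 : i + 1 < l.length := by omega
    beta_reduce
    rw [List.getD_eq_getElem l 0 h1, List.getD_eq_getElem l 0 h2]
    have := List.isChain_iff_getElem.1 hc i (by omega)
    simpa [List.get_eq_getElem, Pp] using this
  · -- a 0 = 1
    cases l with
    | nil => simp at hh
    | cons a t => simp only [List.head?_cons, Option.some_inj] at hh; simp [hh]
  · -- a (n-1) = m
    beta_reduce
    rw [List.getLast?_eq_getElem?, hlen] at hl
    rw [List.getD_eq_getElem?_getD, hl]
    rfl


theorem prime_diff_ham_path_one_to_m (n m : ℕ) (hn : 6 ≤ n)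
    (hm2 : 2 ≤ m) (hmn : m ≤ n) :
    ∃ a : ℕ → ℤ, IsPrimeDiffHamPath n a ∧ a 0 = 1 ∧ a (n - 1) = m := by
  rcases le_or_gt 9 n with h9 | h9
  · obtain ⟨l, hl⟩ := Qall n h9 1 m (by simp only [Finset.mem_Icc]; omega)
      (by simp only [Finset.mem_Icc]; omega) (by omega)
    exact ham_to_fun n m (by omega) l hl
  · exact ham_to_fun n m (by omega) _
      (small678 n (by simp only [Finset.mem_Icc]; omega) m (by simp only [Finset.mem_Icc]; omega))
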